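/- Fix a vertex μ and vectors f̂, ĝ, ĥ ∈ ℚ^N; write f := f̂V and U_i := Γ^μ_i∖{i} for i∼μ. Then the entries of f̂_{⟨ĝ⟩[ĥ]} are: (f̂_{⟨ĝ⟩[ĥ]})_μ = f̂_μ − Σ_{ν∼μ} ρ_{[μ,ν]}(μ)·ĥ_ν; (f̂_{⟨ĝ⟩[ĥ]})_i = f̂_i + ĥ_i + Σ_{j∈U_i} ρ_{[i,j]}(μ)·ĝ_j for i∼μ; and (f̂_{⟨ĝ⟩[ĥ]})_i = f̂_i − ĝ_i for all other i. Furthermore, (f̂_{⟨ĝ⟩}V)_i = f_i − Σ_{ν∼μ} Σ_{j∈Γ^μ_ν} ĝ_j·φ_μ^{[ν,j]}(i)·V_{μi}; hence if ĝ ≥ 0 then (f̂_{⟨ĝ⟩}V)_i ≤ f_i, with equality when d(μ,i) ≤ 1, and with strict inequality exactly when i ∈ Γ^ν_j for some ν∼μ and some j ∈ Γ^μ_ν with ĝ_j > 0. Similarly, (f̂_{[ĥ]}V)_i = f_i + Σ_{ν∼μ} ĥ_ν·φ_μ^{[μ,ν]}(i)·V_{μi}; hence if ĥ ≥ 0 then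 (f̂_{[ĥ]}V)_i ≥ f_i, with strict inequality exactly when i ∈ Γ^μ_ν for some ν∼μ with ĥ_ν > 0. -/

import Mathlib

open Matrix BigOperators

open scoped Classical

noncomputable section

/-- Proximity data of a dual graph on vertex set `Fin N`, built from a single
root vertex by a finite sequence of elementary modifications. Vertices are
ordered by creation; each new vertex is proximate to at most two existing
(earlier) vertices, which must be adjacent to each other at that time if
there are two of them. -/
structure DualGraph where
  N : ℕ
  Npos : 0 < N
  prox : Fin N → Fin N → Prop
  prox_lt : ∀ {μ ν}, prox μ ν → ν < μ
  prox_card : ∀ μ, {ν | prox μ ν}.ncard ≤ 2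
  prox_nonempty : ∀ μ : Fin N, 0 < (μ : ℕ) → ∃ ν, prox μ ν
  prox_pair : ∀ {μ a b}, prox μ a → prox μ b → a ≠ b →
      (prox a b ∨ prox b a) ∧ ∀ ρ, ρ < μ → ¬(prox ρ a ∧ prox ρ b)

namespace DualGraph

variable (G : DualGraph)

/-- The proximity matrix `P`. -/
def P : Matrix (Fin G.N) (Fin G.N) ℚ :=
  fun μ ν => if μ = ν then 1 else if G.prox μ ν then -1 else 0

/-- `Q = P⁻¹`. -/
def Q : Matrix (Fin G.N) (Fin G.N) ℚ := (G.P)⁻¹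

/-- The valuation matrix `V = (PᵀP)⁻¹`. -/
def V : Matrix (Fin G.N) (Fin G.N) ℚ := (G.Pᵀ * G.P)⁻¹

/-- Adjacency in the dual graph: `μ ∼ ν` iff `(PᵀP)_{μν} = -1`. -/
def adj (μ ν : Fin G.N) : Prop := μ ≠ ν ∧ (G.Pᵀ * G.P) μ ν = -1

lemma adj_symm {μ ν : Fin G.N} (h : G.adj μ ν) : G.adj ν μ := by
  obtain ⟨hne, h2⟩ := h
  refine ⟨hne.symm, ?_⟩
  have ht : (G.Pᵀ * G.P)ᵀ = G.Pᵀ * G.P := by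
    rw [Matrix.transpose_mul, Matrix.transpose_transpose]
  calc (G.Pᵀ * G.P) ν μ = (G.Pᵀ * G.P)ᵀ μ ν := rfl
    _ = (G.Pᵀ * G.P) μ ν := by rw [ht]
    _ = -1 := h2

/-- The dual graph as a simple graph. -/
def graph : SimpleGraph (Fin G.N) where
  Adj := G.adj
  symm := ⟨fun _ _ h => G.adj_symm h⟩
  loopless := ⟨fun μ h => h.1 rfl⟩

/-- The graph distance `d(μ,ν)`. -/
def dist (μ ν : Fin G.N) : ℕ := G.graph.dist μ ν

/-- The set of vertices on the unique path `[μ,γ]` from `μ` to `γ`. -/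
def pathSet (μ γ : Fin G.N) : Finset (Fin G.N) :=
  Finset.univ.filter (fun ν => G.dist μ ν + G.dist ν γ = G.dist μ γ)

/-- The branch `Γ^μ_ν` emanating from `μ` towards `ν`: the maximal connected
subgraph of `Γ` containing `ν` but not `μ` (with `Γ^μ_μ = ∅`). -/
def branch (μ ν : Fin G.N) : Finset (Fin G.N) :=
  Finset.univ.filter (fun η => ν ≠ μ ∧ η ≠ μ ∧ μ ∉ G.pathSet ν η)

/-- The set of vertices adjacent to `μ`. -/
def nbrs (μ : Fin G.N) : Finset (Fin G.N) := Finset.univ.filter (fun ν => G.adj μ ν)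

/-- The valence `v_Γ(μ)`: the number of vertices adjacent to `μ`. -/
def valence (μ : Fin G.N) : ℕ := (G.nbrs μ).card

/-- The weight `w_Γ(μ) = (PᵀP)_{μμ}`. -/
def w (μ : Fin G.N) : ℚ := (G.Pᵀ * G.P) μ μ

/-- The canonical vector `k`, `k_ν = Σ_μ q_{νμ}`. -/
def kvec : Fin G.N → ℚ := fun ν => ∑ μ, G.Q ν μ

/-- A divisor with valuation vector `f` is antinef iff its factorization
vector `f̂ = f PᵀP` is nonnegative. -/
def Antinef (f : Fin G.N → ℚ) : Prop := ∀ ν, 0 ≤ (f ᵥ* (G.Pᵀ * G.P)) ν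

/-- `λ(fE, gE; ν) = (f_ν + k_ν + 1)/g_ν` for divisors with valuation
vectors `f`, `g`. -/
def lamDiv (f g : Fin G.N → ℚ) (ν : Fin G.N) : ℚ := (f ν + G.kvec ν + 1) / g ν

/-- `ρ_{[μ,γ]}(ν) = V_{γν}/V_{μν}`. -/
def rho (μ γ ν : Fin G.N) : ℚ := G.V γ ν / G.V μ ν

/-- `r̂_{[μ,γ]} = 𝟙_γ − ρ_{[μ,γ]}(μ)·𝟙_μ`. -/
def rhat (μ γ : Fin G.N) : Fin G.N → ℚ :=
  fun j => (if j = γ then 1 else 0) - G.rho μ γ μ * (if j = μ then 1 else 0)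

/-- `φ_η^{[μ,γ]}(ν) = (r̂_{[μ,γ]}V)_ν / V_{ην}`. -/
def phi (η μ γ ν : Fin G.N) : ℚ := (G.rhat μ γ ᵥ* G.V) ν / G.V η ν

/-- The transform `f̂_{⟨ĝ⟩[ĥ]}` relative to the vertex `μ`. -/
def transform (μ : Fin G.N) (fh gh hh : Fin G.N → ℚ) : Fin G.N → ℚ :=
  fh - (∑ i ∈ G.nbrs μ, ∑ j ∈ G.branch μ i, gh j • G.rhat i j)
     + ∑ i ∈ G.nbrs μ, hh i • G.rhat μ i

/-- The transform `f̂^𝒩 = f̂ − Σ_i f̂_i·r̂_{[μ,i]}` relative to the vertex `μ`. -/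
def nmap (μ : Fin G.N) (fh : Fin G.N → ℚ) : Fin G.N → ℚ :=
  fh - ∑ i, fh i • G.rhat μ i

/-- A vertex is free if it is proximate to at most one vertex. -/
def Free (μ : Fin G.N) : Prop := {ν | G.prox μ ν}.ncard ≤ 1

/-- `μ` is infinitely near to `ν` (written `ν ⊂ μ`): the reflexive-transitive
closure of proximity. -/
def InfNear (μ ν : Fin G.N) : Prop := Relation.ReflTransGen G.prox μ ν

/-- The root vertex. -/
def root : Fin G.N := ⟨0, G.Npos⟩

/-- The branch `Γ^μ_ν` is anterior to `μ` if `μ` is infinitely near to some of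
its vertices; otherwise it is posterior. -/
def Anterior (μ ν : Fin G.N) : Prop := ∃ η ∈ G.branch μ ν, G.InfNear μ η

/-- The pair `(γ,τ)` associated to `μ`. -/
def PairAssociated (γ τ μ : Fin G.N) : Prop :=
  G.InfNear τ γ ∧ G.InfNear μ τ ∧ G.Free τ ∧
  (∀ ν, G.Free ν → G.InfNear μ ν → G.InfNear τ ν) ∧
  ((¬ G.Free γ ∧ ∀ ν, ¬ G.Free ν → G.InfNear τ ν → G.InfNear γ ν) ∨
   ((∀ ν, G.InfNear τ ν → G.Free ν) ∧ γ = G.root))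

/-- The entries of `V` as natural numbers (they are positive integers). -/
def Vnat (μ ν : Fin G.N) : ℕ := (G.V μ ν).num.toNat

/-- The submonoid `SV^μ_ν` of `ℕ` generated by `{V_{μi} : i ∈ Γ^μ_ν ∪ {μ}}`. -/
def SVb (μ ν : Fin G.N) : AddSubmonoid ℕ :=
  AddSubmonoid.closure ↑((insert μ (G.branch μ ν)).image (G.Vnat μ))

/-- `s^μ_ν = gcd{V_{μi} : i ∈ Γ^μ_ν ∪ {μ}}`. -/
def sgcd (μ ν : Fin G.N) : ℕ := (insert μ (G.branch μ ν)).gcd (G.Vnat μ)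

/-- The submonoid `S^μ` of `ℕ` generated by the `s^μ_ν`, `ν ∈ Γ`. -/
def Ssg (μ : Fin G.N) : AddSubmonoid ℕ :=
  AddSubmonoid.closure (Set.range (fun ν => G.sgcd μ ν))

/-- The valuation vector `d = d̂V` of the ideal with factorization vector `d̂`. -/
def dval (dh : Fin G.N → ℕ) : Fin G.N → ℚ := (fun i => (dh i : ℚ)) ᵥ* G.V

/-- `λ(a,ν) = (a + k_ν + 1)/d_ν`. -/
def lamA (dh : Fin G.N → ℕ) (a : ℚ) (ν : Fin G.N) : ℚ :=
  (a + G.kvec ν + 1) / G.dval dh ν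

/-- The set of jumping numbers of the ideal with factorization vector `d̂`
supported at the vertex `μ`. -/
def Hset (dh : Fin G.N → ℕ) (μ : Fin G.N) : Set ℚ :=
  { ξ | ∃ f : Fin G.N → ℤ, G.Antinef (fun i => (f i : ℚ)) ∧
      (∀ ν, G.lamA dh (f μ : ℚ) μ ≤ G.lamA dh (f ν : ℚ) ν) ∧
      ξ = G.lamA dh (f μ : ℚ) μ }

end DualGraph
end

noncomputable section
namespace DualGraph

variable (G : DualGraph)

lemma P_apply (μ ν : Fin G.N) :
    G.P μ ν = if μ = ν then 1 else if G.prox μ ν then -1 else 0 := rfl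

lemma P_eq_zero_of_lt {μ ν : Fin G.N} (h : μ < ν) : G.P μ ν = 0 := by
  rw [P_apply, if_neg h.ne, if_neg fun hp => absurd (G.prox_lt hp) (lt_asymm h)]

lemma detP : G.P.det = 1 := by
  have h : G.P.BlockTriangular OrderDual.toDual := by
    intro i j hij
    exact G.P_eq_zero_of_lt hij
  rw [Matrix.det_of_lowerTriangular G.P h]
  simp [P_apply]

lemma isUnit_detP : IsUnit G.P.det := by rw [G.detP]; exact isUnit_one

lemma P_mul_Q : G.P * G.Q = 1 := Matrix.mul_nonsing_inv _ G.isUnit_detP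
lemma Q_mul_P : G.Q * G.P = 1 := Matrix.nonsing_inv_mul _ G.isUnit_detP

lemma isUnit_detM : IsUnit (G.Pᵀ * G.P).det := by
  rw [Matrix.det_mul, Matrix.det_transpose, G.detP]; simp

lemma M_mul_V : (G.Pᵀ * G.P) * G.V = 1 := Matrix.mul_nonsing_inv _ G.isUnit_detM
lemma V_mul_M : G.V * (G.Pᵀ * G.P) = 1 := Matrix.nonsing_inv_mul _ G.isUnit_detM

lemma V_eq_QQt : G.V = G.Q * G.Qᵀ := by
  rw [V, Matrix.mul_inv_rev, ← Matrix.transpose_nonsing_inv]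
  rfl

lemma V_symm (a b : Fin G.N) : G.V a b = G.V b a := by
  rw [V_eq_QQt, Matrix.mul_apply, Matrix.mul_apply]
  simp [Matrix.transpose_apply, mul_comm]

lemma M_symm (a b : Fin G.N) : (G.Pᵀ * G.P) a b = (G.Pᵀ * G.P) b a := by
  rw [Matrix.mul_apply, Matrix.mul_apply]
  simp [Matrix.transpose_apply, mul_comm]

lemma P_split (μ ρ : Fin G.N) :
    G.P μ ρ = (if μ = ρ then 1 else 0) + (if G.prox μ ρ then -1 else 0) := by
  rw [P_apply]
  by_cases h : μ = ρ
  · subst h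
    have hnp : ¬ G.prox μ μ := fun hp => lt_irrefl μ (G.prox_lt hp)
    simp [hnp]
  · simp [h]

lemma Q_rec (μ ν : Fin G.N) :
    G.Q μ ν = (if μ = ν then 1 else 0)
      + ∑ ρ ∈ Finset.univ.filter (fun ρ => G.prox μ ρ), G.Q ρ ν := by
  have h : (G.P * G.Q) μ ν = (1 : Matrix (Fin G.N) (Fin G.N) ℚ) μ ν := by
    rw [G.P_mul_Q]
  rw [Matrix.mul_apply, Matrix.one_apply] at h
  have h2 : ∀ ρ, G.P μ ρ * G.Q ρ ν
      = (if μ = ρ then 1 else 0) * G.Q ρ ν + (if G.prox μ ρ then -1 else 0) * G.Q ρ ν := by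
    intro ρ; rw [P_split, add_mul]
  rw [Finset.sum_congr rfl (fun ρ _ => h2 ρ), Finset.sum_add_distrib] at h
  simp only [ite_mul, one_mul, zero_mul, neg_one_mul, Finset.sum_ite_eq, Finset.mem_univ,
    if_true] at h
  rw [← Finset.sum_filter (fun ρ => G.prox μ ρ) (fun ρ => -G.Q ρ ν)] at h
  rw [Finset.sum_neg_distrib] at h
  linarith [h]

lemma Q_nonneg (μ ν : Fin G.N) : 0 ≤ G.Q μ ν := by
  suffices H : ∀ n : ℕ, ∀ μ : Fin G.N, (μ:ℕ) < n → ∀ ν, 0 ≤ G.Q μ ν from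
    H G.N μ μ.isLt ν
  intro n
  induction n using Nat.strong_induction_on with
  | _ n ih =>
    intro μ hμ ν
    rw [G.Q_rec]
    have h1 : (0:ℚ) ≤ ∑ ρ ∈ Finset.univ.filter (fun ρ => G.prox μ ρ), G.Q ρ ν := by
      apply Finset.sum_nonneg
      intro ρ hρ
      rw [Finset.mem_filter] at hρ
      have hlt : (ρ:ℕ) < (μ:ℕ) := G.prox_lt hρ.2
      exact ih ((ρ:ℕ)+1) (by omega) ρ (by omega) ν
    positivity

lemma Q_root_one_le (μ : Fin G.N) : 1 ≤ G.Q μ G.root := by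
  suffices H : ∀ n : ℕ, ∀ μ : Fin G.N, (μ:ℕ) < n → 1 ≤ G.Q μ G.root from
    H G.N μ μ.isLt
  intro n
  induction n using Nat.strong_induction_on with
  | _ n ih =>
    intro μ hμ
    rw [G.Q_rec]
    by_cases h0 : (μ:ℕ) = 0
    · have : μ = G.root := by
        apply Fin.ext; simpa [root] using h0
      subst this
      have : Finset.univ.filter (fun ρ => G.prox G.root ρ) = ∅ := by
        apply Finset.filter_eq_empty_iff.2
        intro ρ _ hp
        have := G.prox_lt hp
        simp [root, Fin.lt_def] at this
      simp [this]
    · obtain ⟨ν, hν⟩ := G.prox_nonempty μ (by omega)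
      have hmem : ν ∈ Finset.univ.filter (fun ρ => G.prox μ ρ) := by
        simp [hν]
      have hlt : (ν:ℕ) < (μ:ℕ) := G.prox_lt hν
      have h1 : 1 ≤ G.Q ν G.root := ih ((ν:ℕ)+1) (by omega) ν (by omega)
      have h2 : G.Q ν G.root ≤ ∑ ρ ∈ Finset.univ.filter (fun ρ => G.prox μ ρ), G.Q ρ G.root :=
        Finset.single_le_sum (fun ρ _ => G.Q_nonneg ρ G.root) hmem
      have : (0:ℚ) ≤ if μ = G.root then 1 else 0 := by positivity
      linarith

lemma V_one_le (a b : Fin G.N) : 1 ≤ G.V a b := by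
  rw [V_eq_QQt, Matrix.mul_apply]
  have h1 : G.Q a G.root * G.Qᵀ G.root b ≤ ∑ ρ, G.Q a ρ * G.Qᵀ ρ b := by
    apply Finset.single_le_sum (f := fun ρ => G.Q a ρ * G.Qᵀ ρ b)
    · intro ρ _
      exact mul_nonneg (G.Q_nonneg a ρ) (G.Q_nonneg b ρ)
    · exact Finset.mem_univ _
  have h2 : (1:ℚ) ≤ G.Q a G.root * G.Qᵀ G.root b := by
    have he : G.Qᵀ G.root b = G.Q b G.root := rfl
    rw [he]
    nlinarith [G.Q_root_one_le a, G.Q_root_one_le b]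
  linarith

lemma V_pos (a b : Fin G.N) : 0 < G.V a b := lt_of_lt_of_le one_pos (G.V_one_le a b)
lemma V_ne (a b : Fin G.N) : G.V a b ≠ 0 := ne_of_gt (G.V_pos a b)

lemma quadM (x : Fin G.N → ℚ) :
    x ᵥ* (G.Pᵀ * G.P) ⬝ᵥ x = (G.P *ᵥ x) ⬝ᵥ (G.P *ᵥ x) := by
  rw [← Matrix.vecMul_vecMul, Matrix.vecMul_transpose, ← Matrix.dotProduct_mulVec]

lemma quadM_pos {x : Fin G.N → ℚ} (hx : x ≠ 0) :
    0 < x ᵥ* (G.Pᵀ * G.P) ⬝ᵥ x := by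
  rw [G.quadM]
  set y := G.P *ᵥ x with hy
  have hynz : y ≠ 0 := by
    intro h
    apply hx
    have : G.Q *ᵥ y = x := by
      rw [hy, Matrix.mulVec_mulVec, G.Q_mul_P, Matrix.one_mulVec]
    rw [← this, h, Matrix.mulVec_zero]
  rw [dotProduct]
  obtain ⟨i0, hi0⟩ : ∃ i, y i ≠ 0 := by
    by_contra h
    push_neg at h
    exact hynz (funext h)
  apply Finset.sum_pos' (fun i _ => mul_self_nonneg (y i))
  exact ⟨i0, Finset.mem_univ _, mul_self_pos.2 hi0⟩

lemma quadV (x : Fin G.N → ℚ) :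
    x ᵥ* G.V ⬝ᵥ x = (x ᵥ* G.Q) ⬝ᵥ (x ᵥ* G.Q) := by
  rw [G.V_eq_QQt, ← Matrix.vecMul_vecMul, ← Matrix.dotProduct_mulVec,
    Matrix.mulVec_transpose]

lemma quadV_pos {x : Fin G.N → ℚ} (hx : x ≠ 0) :
    0 < x ᵥ* G.V ⬝ᵥ x := by
  rw [G.quadV]
  set y := x ᵥ* G.Q with hy
  have hynz : y ≠ 0 := by
    intro h
    apply hx
    have : y ᵥ* G.P = x := by
      rw [hy, Matrix.vecMul_vecMul, G.Q_mul_P, Matrix.vecMul_one]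
    rw [← this, h, Matrix.zero_vecMul]
  rw [dotProduct]
  obtain ⟨i0, hi0⟩ : ∃ i, y i ≠ 0 := by
    by_contra h
    push_neg at h
    exact hynz (funext h)
  apply Finset.sum_pos' (fun i _ => mul_self_nonneg (y i))
  exact ⟨i0, Finset.mem_univ _, mul_self_pos.2 hi0⟩

lemma cs_strict {a b : Fin G.N} (hab : a ≠ b) :
    G.V a b ^ 2 < G.V a a * G.V b b := by
  set x : Fin G.N → ℚ :=
    fun i => (if i = a then G.V b b else 0) - (if i = b then G.V a b else 0) with hxdef
  have hxa : x a = G.V b b := by simp [hxdef, hab]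
  have hxnz : x ≠ 0 := by
    intro h
    have := congrFun h a
    rw [hxa] at this
    exact G.V_ne b b (by simpa using this)
  have hq := G.quadV_pos hxnz
  have hvm : ∀ j, (x ᵥ* G.V) j = G.V b b * G.V a j - G.V a b * G.V b j := by
    intro j
    rw [Matrix.vecMul, dotProduct]
    simp only [hxdef, sub_mul, ite_mul, zero_mul]
    rw [Finset.sum_sub_distrib]
    rw [Finset.sum_ite_eq' Finset.univ a (fun i => G.V b b * G.V i j),
      Finset.sum_ite_eq' Finset.univ b (fun i => G.V a b * G.V i j)]
    simp
  have hdot : x ᵥ* G.V ⬝ᵥ x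
      = G.V b b * (G.V a a * G.V b b - G.V a b ^ 2) := by
    rw [dotProduct]
    have : ∀ j, (x ᵥ* G.V) j * x j
        = (G.V b b * G.V a j - G.V a b * G.V b j)
          * ((if j = a then G.V b b else 0) - (if j = b then G.V a b else 0)) := by
      intro j; rw [hvm j]
    rw [Finset.sum_congr rfl fun j _ => this j]
    simp only [mul_sub, sub_mul, mul_ite, ite_mul, mul_zero, zero_mul]
    rw [Finset.sum_sub_distrib]
    simp only [Finset.sum_ite_eq', Finset.mem_univ, if_true]
    have hsym : G.V b a = G.V a b := G.V_symm b a
    rw [hsym]; ring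
  nlinarith [hq, hdot, G.V_pos b b]
end DualGraph
end

noncomputable section
namespace DualGraph

variable (G : DualGraph)

lemma not_prox_self (x : Fin G.N) : ¬ G.prox x x := fun hp => lt_irrefl x (G.prox_lt hp)

lemma common_unique {a b : Fin G.N} (hab : a ≠ b) {ρ σ : Fin G.N}
    (h1 : G.prox ρ a) (h2 : G.prox ρ b) (h3 : G.prox σ a) (h4 : G.prox σ b) : ρ = σ := by
  by_contra hne
  rcases lt_or_gt_of_ne hne with h | h
  · exact (G.prox_pair h3 h4 hab).2 ρ h ⟨h1, h2⟩
  · exact (G.prox_pair h1 h2 hab).2 σ h ⟨h3, h4⟩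

lemma M_term {a b : Fin G.N} (hab : a ≠ b) (ρ : Fin G.N) :
    G.P ρ a * G.P ρ b
      = (if ρ = a then (if G.prox a b then (-1:ℚ) else 0) else 0)
        + (if ρ = b then (if G.prox b a then (-1:ℚ) else 0) else 0)
        + (if G.prox ρ a ∧ G.prox ρ b then 1 else 0) := by
  by_cases h1 : ρ = a
  · subst h1
    simp [P_apply, hab, Ne.symm hab, G.not_prox_self ρ]
  · by_cases h2 : ρ = b
    · subst h2
      simp [P_apply, h1, Ne.symm hab, G.not_prox_self ρ]
    · simp only [P_apply, if_neg h1, if_neg h2]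
      by_cases h3 : G.prox ρ a <;> by_cases h4 : G.prox ρ b <;> simp [h3, h4]

lemma M_offdiag {a b : Fin G.N} (hab : a ≠ b) :
    (G.Pᵀ * G.P) a b
      = (if G.prox a b then (-1:ℚ) else 0) + (if G.prox b a then (-1:ℚ) else 0)
        + ((Finset.univ.filter (fun ρ => G.prox ρ a ∧ G.prox ρ b)).card : ℚ) := by
  rw [Matrix.mul_apply]
  simp only [Matrix.transpose_apply]
  rw [Finset.sum_congr rfl (fun ρ _ => G.M_term hab ρ)]
  rw [Finset.sum_add_distrib, Finset.sum_add_distrib]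
  rw [Finset.sum_boole]
  simp only [Finset.sum_ite_eq', Finset.mem_univ, if_true]

lemma common_card_le_one {a b : Fin G.N} (hab : a ≠ b) :
    (Finset.univ.filter (fun ρ => G.prox ρ a ∧ G.prox ρ b)).card ≤ 1 := by
  rw [Finset.card_le_one]
  intro x hx y hy
  rw [Finset.mem_filter] at hx hy
  exact G.common_unique hab hx.2.1 hx.2.2 hy.2.1 hy.2.2

lemma M_offdiag_cases {a b : Fin G.N} (hab : a ≠ b) :
    (G.Pᵀ * G.P) a b = 0 ∨ (G.Pᵀ * G.P) a b = -1 := by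
  rw [G.M_offdiag hab]
  have hasym : ¬(G.prox a b ∧ G.prox b a) :=
    fun ⟨h1, h2⟩ => lt_asymm (G.prox_lt h1) (G.prox_lt h2)
  have hc1 := G.common_card_le_one hab
  have hc0 : (Finset.univ.filter (fun ρ => G.prox ρ a ∧ G.prox ρ b)).card = 0
      ∨ (Finset.univ.filter (fun ρ => G.prox ρ a ∧ G.prox ρ b)).card = 1 := by omega
  rcases hc0 with h0 | h1
  · rw [h0]
    by_cases hp1 : G.prox a b
    · have hp2 : ¬ G.prox b a := fun h => hasym ⟨hp1, h⟩
      right; simp [hp1, hp2]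
    · by_cases hp2 : G.prox b a
      · right; simp [hp1, hp2]
      · left; simp [hp1, hp2]
  · obtain ⟨ρ, hρ⟩ := Finset.card_pos.1 (by omega :
      0 < (Finset.univ.filter (fun ρ => G.prox ρ a ∧ G.prox ρ b)).card)
    rw [Finset.mem_filter] at hρ
    have hor := (G.prox_pair hρ.2.1 hρ.2.2 hab).1
    rw [h1]
    rcases hor with hp | hp
    · have hp2 : ¬ G.prox b a := fun h => hasym ⟨hp, h⟩
      left; simp [hp, hp2]
    · have hp2 : ¬ G.prox a b := fun h => hasym ⟨h, hp⟩
      left; simp [hp, hp2]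

lemma M_of_ne {a b : Fin G.N} (hab : a ≠ b) :
    (G.Pᵀ * G.P) a b = if G.adj a b then -1 else 0 := by
  by_cases h : G.adj a b
  · rw [if_pos h]; exact h.2
  · rw [if_neg h]
    rcases G.M_offdiag_cases hab with h0 | h1
    · exact h0
    · exact absurd ⟨hab, h1⟩ h

lemma exists_common {a b : Fin G.N} (hp : G.prox a b) (hna : ¬ G.adj a b) :
    ∃ ρ, G.prox ρ a ∧ G.prox ρ b := by
  have hab : a ≠ b := (G.prox_lt hp).ne'
  have hM := G.M_of_ne hab
  rw [if_neg hna, G.M_offdiag hab, if_pos hp] at hM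
  by_contra hne
  push_neg at hne
  have hfe : (Finset.univ.filter (fun ρ => G.prox ρ a ∧ G.prox ρ b)) = ∅ := by
    apply Finset.filter_eq_empty_iff.2
    intro ρ _ hrr
    exact hne ρ hrr.1 hrr.2
  rw [hfe] at hM
  revert hM
  by_cases h : G.prox b a <;> simp [h] <;> norm_num

lemma reach_of_prox : ∀ (k : ℕ) {μ ν : Fin G.N}, G.N - (μ:ℕ) ≤ k → G.prox μ ν →
    G.graph.Reachable μ ν := by
  intro k
  induction k with
  | zero => intro μ ν hk hp; exfalso; have := μ.isLt; omega
  | succ k ih =>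
    intro μ ν hk hp
    by_cases h : G.adj μ ν
    · exact (show G.graph.Adj μ ν from h).reachable
    · obtain ⟨ρ, h1, h2⟩ := G.exists_common hp h
      have l1 : (μ:ℕ) < (ρ:ℕ) := G.prox_lt h1
      have hρ := ρ.isLt
      have r1 := ih (μ := ρ) (ν := μ) (by omega) h1
      have r2 := ih (μ := ρ) (ν := ν) (by omega) h2
      exact r1.symm.trans r2

lemma reach_root (μ : Fin G.N) : G.graph.Reachable μ G.root := by
  suffices H : ∀ n : ℕ, ∀ μ : Fin G.N, (μ:ℕ) < n → G.graph.Reachable μ G.root from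
    H G.N μ μ.isLt
  intro n
  induction n using Nat.strong_induction_on with
  | _ n ih =>
    intro μ hμ
    by_cases h0 : (μ:ℕ) = 0
    · have : μ = G.root := by apply Fin.ext; simpa [root] using h0
      rw [this]
    · obtain ⟨ν, hν⟩ := G.prox_nonempty μ (by omega)
      have hlt : (ν:ℕ) < (μ:ℕ) := G.prox_lt hν
      exact (G.reach_of_prox G.N (by omega) hν).trans (ih ((ν:ℕ)+1) (by omega) ν (by omega))

lemma conn : G.graph.Connected := by
  haveI : Nonempty (Fin G.N) := ⟨G.root⟩
  exact SimpleGraph.Connected.mk (fun u v => (G.reach_root u).trans (G.reach_root v).symm)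

lemma sQ_values (ρ : Fin G.N) :
    (∑ ν, (if G.prox ρ ν then (1:ℚ) else 0)) = 0 ∨
    (∑ ν, (if G.prox ρ ν then (1:ℚ) else 0)) = 1 ∨
    (∑ ν, (if G.prox ρ ν then (1:ℚ) else 0)) = 2 := by
  rw [Finset.sum_boole]
  have hcard : (Finset.univ.filter (fun ν => G.prox ρ ν)).card ≤ 2 := by
    have := G.prox_card ρ
    rwa [Set.ncard_eq_toFinset_card', Set.toFinset_setOf] at this
  interval_cases h : (Finset.univ.filter (fun ν => G.prox ρ ν)).card <;> norm_num

lemma sQ_eq_zero_iff (ρ : Fin G.N) :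
    (∑ ν, (if G.prox ρ ν then (1:ℚ) else 0)) = 0 ↔ ρ = G.root := by
  rw [Finset.sum_boole]
  rw [Nat.cast_eq_zero, Finset.card_eq_zero, Finset.filter_eq_empty_iff]
  constructor
  · intro h
    by_contra hne
    have h0 : 0 < (ρ:ℕ) := by
      rcases Nat.eq_zero_or_pos (ρ:ℕ) with h' | h'
      · exact absurd (Fin.ext h' : ρ = G.root) hne
      · exact h'
    obtain ⟨ν, hν⟩ := G.prox_nonempty ρ h0
    exact h (Finset.mem_univ ν) hν
  · intro h ν _ hp
    rw [h] at hp
    have := G.prox_lt hp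
    simp [root, Fin.lt_def] at this

lemma degQ_eq (a : Fin G.N) [DecidableRel G.graph.Adj] :
    (∑ b, (if G.adj a b then (1:ℚ) else 0)) = (G.graph.degree a : ℚ) := by
  rw [Finset.sum_boole]
  congr 1
  rw [SimpleGraph.degree]
  congr 1
  ext b
  simp only [Finset.mem_filter, Finset.mem_univ, true_and, SimpleGraph.mem_neighborFinset]
  rfl

lemma edgeFinset_card_irrel {V' : Type*} (H : SimpleGraph V') (i1 i2 : Fintype H.edgeSet) :
    (@SimpleGraph.edgeFinset V' H i1).card = (@SimpleGraph.edgeFinset V' H i2).card := by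
  have h : i1 = i2 := Subsingleton.elim i1 i2
  subst h
  rfl

lemma edge_count [Fintype G.graph.edgeSet] : G.graph.edgeFinset.card + 1 = G.N := by
  classical
  -- row sums of P
  have hrow : ∀ ρ : Fin G.N, (∑ a, G.P ρ a) = 1 - ∑ ν, (if G.prox ρ ν then (1:ℚ) else 0) := by
    intro ρ
    rw [Finset.sum_congr rfl (fun a _ => G.P_split ρ a), Finset.sum_add_distrib]
    simp only [Finset.sum_ite_eq, Finset.mem_univ, if_true]
    have : (∑ a, (if G.prox ρ a then (-1:ℚ) else 0)) = - ∑ a, (if G.prox ρ a then (1:ℚ) else 0) := by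
      rw [← Finset.sum_neg_distrib]
      apply Finset.sum_congr rfl
      intro a _
      by_cases h : G.prox ρ a <;> simp [h]
    rw [this]; ring
  -- total sum
  have htot : (∑ a, ∑ b, (G.Pᵀ * G.P) a b)
      = ∑ ρ, (1 - ∑ ν, (if G.prox ρ ν then (1:ℚ) else 0))^2 := by
    have h1 : ∀ a b : Fin G.N, (G.Pᵀ * G.P) a b = ∑ ρ, G.P ρ a * G.P ρ b := by
      intro a b; rw [Matrix.mul_apply]; simp [Matrix.transpose_apply]
    calc (∑ a, ∑ b, (G.Pᵀ * G.P) a b) = ∑ a, ∑ b, ∑ ρ, G.P ρ a * G.P ρ b := by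
          exact Finset.sum_congr rfl fun a _ => Finset.sum_congr rfl fun b _ => h1 a b
      _ = ∑ a, ∑ ρ, ∑ b, G.P ρ a * G.P ρ b := by
          exact Finset.sum_congr rfl fun a _ => Finset.sum_comm
      _ = ∑ ρ, ∑ a, ∑ b, G.P ρ a * G.P ρ b := Finset.sum_comm
      _ = ∑ ρ, (∑ a, G.P ρ a) * (∑ b, G.P ρ b) := by
          exact Finset.sum_congr rfl fun ρ _ => (Finset.sum_mul_sum _ _ _ _).symm
      _ = ∑ ρ, (1 - ∑ ν, (if G.prox ρ ν then (1:ℚ) else 0))^2 := by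
          exact Finset.sum_congr rfl fun ρ _ => by rw [hrow]; ring
  -- diagonal
  have hdiag : ∀ a : Fin G.N, (G.Pᵀ * G.P) a a
      = 1 + ∑ ρ, (if G.prox ρ a then (1:ℚ) else 0) := by
    intro a
    rw [Matrix.mul_apply]
    simp only [Matrix.transpose_apply]
    have h1 : ∀ ρ : Fin G.N, G.P ρ a * G.P ρ a
        = (if ρ = a then (1:ℚ) else 0) + (if G.prox ρ a then (1:ℚ) else 0) := by
      intro ρ
      by_cases h : ρ = a
      · subst h; simp [P_apply, G.not_prox_self ρ]
      · simp only [P_apply, if_neg h]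
        by_cases h2 : G.prox ρ a <;> simp [h2]
    rw [Finset.sum_congr rfl fun ρ _ => h1 ρ, Finset.sum_add_distrib]
    simp only [Finset.sum_ite_eq', Finset.mem_univ, if_true]
  -- row splits
  have hMsplit : ∀ a : Fin G.N, (∑ b, (G.Pᵀ * G.P) a b)
      = (G.Pᵀ * G.P) a a - ∑ b, (if G.adj a b then (1:ℚ) else 0) := by
    intro a
    have h1 : ∀ b : Fin G.N, (G.Pᵀ * G.P) a b
        = (if b = a then (G.Pᵀ * G.P) a a else 0) + (if G.adj a b then (-1:ℚ) else 0) := by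
      intro b
      by_cases h : b = a
      · subst h
        have : ¬ G.adj b b := fun hc => hc.1 rfl
        simp [this]
      · rw [if_neg h, G.M_of_ne (Ne.symm h)]
        by_cases h2 : G.adj a b <;> simp [h2]
    rw [Finset.sum_congr rfl fun b _ => h1 b, Finset.sum_add_distrib]
    simp only [Finset.sum_ite_eq', Finset.mem_univ, if_true]
    have : (∑ b, (if G.adj a b then (-1:ℚ) else 0)) = - ∑ b, (if G.adj a b then (1:ℚ) else 0) := by
      rw [← Finset.sum_neg_distrib]
      apply Finset.sum_congr rfl
      intro b _
      by_cases h : G.adj a b <;> simp [h]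
    rw [this]; ring
  -- sum tQ = sum sQ
  have hst : (∑ a : Fin G.N, ∑ ρ, (if G.prox ρ a then (1:ℚ) else 0))
      = ∑ ρ : Fin G.N, ∑ ν, (if G.prox ρ ν then (1:ℚ) else 0) := Finset.sum_comm
  -- degree sum
  have hdegsum : (∑ a : Fin G.N, ∑ b, (if G.adj a b then (1:ℚ) else 0))
      = 2 * (G.N : ℚ) - 2 := by
    have e1 : (∑ a : Fin G.N, ∑ b, (if G.adj a b then (1:ℚ) else 0))
        = ∑ a, ((G.Pᵀ * G.P) a a) - ∑ a, ∑ b, (G.Pᵀ * G.P) a b := by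
      rw [← Finset.sum_sub_distrib]
      apply Finset.sum_congr rfl
      intro a _
      rw [hMsplit a]; ring
    rw [e1, htot]
    rw [Finset.sum_congr rfl fun a _ => hdiag a, Finset.sum_add_distrib, hst]
    have e2 : ∀ ρ : Fin G.N,
        ((∑ ν, (if G.prox ρ ν then (1:ℚ) else 0))
          - (1 - ∑ ν, (if G.prox ρ ν then (1:ℚ) else 0))^2)
        = ((if ρ = G.root then (0:ℚ) else 2) - 1) := by
      intro ρ
      rcases G.sQ_values ρ with h | h | h
      · rw [h, if_pos ((G.sQ_eq_zero_iff ρ).1 h)]; norm_num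
      · have : ρ ≠ G.root := by
          intro he
          rw [← G.sQ_eq_zero_iff ρ] at he
          rw [h] at he; norm_num at he
        rw [h, if_neg this]; norm_num
      · have : ρ ≠ G.root := by
          intro he
          rw [← G.sQ_eq_zero_iff ρ] at he
          rw [h] at he; norm_num at he
        rw [h, if_neg this]; norm_num
    have key : (∑ ρ : Fin G.N, ((∑ ν, (if G.prox ρ ν then (1:ℚ) else 0))
          - (1 - ∑ ν, (if G.prox ρ ν then (1:ℚ) else 0))^2))
        = ∑ ρ : Fin G.N, ((if ρ = G.root then (0:ℚ) else 2) - 1) :=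
      Finset.sum_congr rfl fun ρ _ => e2 ρ
    rw [Finset.sum_sub_distrib, Finset.sum_sub_distrib] at key
    have h3 : ∀ ρ : Fin G.N, (if ρ = G.root then (0:ℚ) else 2)
        = 2 - (if ρ = G.root then 2 else 0) := by
      intro ρ; split <;> norm_num
    have h4 : (∑ ρ : Fin G.N, (if ρ = G.root then (0:ℚ) else 2)) = 2 * (G.N:ℚ) - 2 := by
      rw [Finset.sum_congr rfl fun ρ _ => h3 ρ, Finset.sum_sub_distrib]
      rw [Finset.sum_ite_eq' Finset.univ G.root (fun _ => (2:ℚ))]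
      simp [Finset.card_univ, mul_comm]
    have h5 : (∑ _x : Fin G.N, (1:ℚ)) = (G.N:ℚ) := by
      simp [Finset.card_univ]
    rw [h4, h5] at key
    have h6 : (∑ _x : Fin G.N, (1:ℚ)) = (G.N:ℚ) := by
      simp [Finset.card_univ]
    rw [h6]
    linarith
  -- handshake
  haveI hdec : DecidableRel G.graph.Adj := Classical.decRel _
  have hhs := SimpleGraph.sum_degrees_eq_twice_card_edges G.graph
  rw [edgeFinset_card_irrel G.graph _ ‹Fintype G.graph.edgeSet›] at hhs
  have hdeg2 : (∑ a : Fin G.N, ∑ b, (if G.adj a b then (1:ℚ) else 0))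
      = ((∑ v : Fin G.N, G.graph.degree v : ℕ) : ℚ) := by
    push_cast
    exact Finset.sum_congr rfl fun a _ => G.degQ_eq a
  rw [hdegsum, hhs] at hdeg2
  have hcast : ((2 * G.graph.edgeFinset.card : ℕ) : ℚ) = 2 * (G.graph.edgeFinset.card : ℚ) := by
    push_cast; ring
  rw [hcast] at hdeg2
  have hNpos := G.Npos
  have h8 : ((G.graph.edgeFinset.card + 1 : ℕ) : ℚ) = (G.N : ℚ) := by push_cast; linarith
  exact_mod_cast h8

end DualGraph
end

noncomputable section
namespace DualGraph

lemma edgeFinset_card_natCard {V' : Type*} (H : SimpleGraph V') [Fintype V'] [i : Fintype H.edgeSet] :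
    (H.edgeFinset).card = Nat.card H.edgeSet := by
  rw [SimpleGraph.edgeFinset_card, Nat.card_eq_fintype_card]

lemma conn_card_le {V' : Type*} [Fintype V'] [DecidableEq V'] (H : SimpleGraph V')
    [Fintype H.edgeSet] (hc : H.Connected) :
    Fintype.card V' ≤ H.edgeFinset.card + 1 := by
  obtain ⟨r⟩ := hc.nonempty
  have hw : ∀ v : V', ∃ p : H.Walk v r, p.length = H.dist v r :=
    fun v => hc.exists_walk_length_eq_dist v r
  choose w hwlen using hw
  have hpos : ∀ v : V', v ≠ r → 0 < (w v).length := by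
    intro v hv; rw [hwlen]; exact hc.pos_dist_of_ne hv
  have hadj : ∀ v : V', v ≠ r → H.Adj v ((w v).getVert 1) := by
    intro v hv
    have h0 := SimpleGraph.Walk.adj_getVert_succ (w v) (i := 0) (hpos v hv)
    rwa [SimpleGraph.Walk.getVert_zero] at h0
  have hdist : ∀ v : V', v ≠ r → H.dist ((w v).getVert 1) r + 1 = H.dist v r := by
    intro v hv
    have hnn : ¬ (w v).Nil := SimpleGraph.Walk.not_nil_iff_lt_length.2 (hpos v hv)
    have h1 : H.dist ((w v).getVert 1) r ≤ (w v).tail.length := SimpleGraph.dist_le _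
    have h2 : (w v).tail.length + 1 = (w v).length := SimpleGraph.Walk.length_tail_add_one hnn
    have h3 : H.dist v r ≤ H.dist v ((w v).getVert 1) + H.dist ((w v).getVert 1) r :=
      hc.dist_triangle
    have h4 : H.dist v ((w v).getVert 1) = 1 := SimpleGraph.dist_eq_one_iff_adj.2 (hadj v hv)
    have h5 := hwlen v
    omega
  have hmem : ∀ v ∈ Finset.univ.erase r, s(v, (w v).getVert 1) ∈ H.edgeFinset := by
    intro v hv
    rw [Finset.mem_erase] at hv
    rw [SimpleGraph.mem_edgeFinset, SimpleGraph.mem_edgeSet]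
    exact hadj v hv.1
  have hinj : Set.InjOn (fun v => s(v, (w v).getVert 1)) ↑(Finset.univ.erase r) := by
    intro u hu v hv he
    rw [Finset.coe_erase, Set.mem_diff] at hu hv
    simp only [Set.mem_singleton_iff] at hu hv
    simp only [Sym2.eq_iff] at he
    rcases he with ⟨h1, _⟩ | ⟨h1, h2⟩
    · exact h1
    · exfalso
      have du := hdist u hu.2
      have dv := hdist v hv.2
      rw [← h1] at dv
      rw [h2] at du
      omega
  have hcard := Finset.card_le_card_of_injOn _ hmem hinj
  rw [Finset.card_erase_of_mem (Finset.mem_univ r), Finset.card_univ] at hcard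
  have : 0 < Fintype.card V' := Fintype.card_pos_iff.2 ⟨r⟩
  omega

variable (G : DualGraph)

lemma isTree : G.graph.IsTree := by
  classical
  constructor
  · exact G.conn
  · rw [SimpleGraph.isAcyclic_iff_forall_adj_isBridge]
    intro v w hvw
    by_contra hbr
    rw [SimpleGraph.isBridge_iff] at hbr
    push_neg at hbr
    have hreach : (G.graph \ SimpleGraph.fromEdgeSet {s(v, w)}).Reachable v w := hbr
    set H := G.graph \ SimpleGraph.fromEdgeSet {s(v, w)} with hH
    have hstep : ∀ x y : Fin G.N, G.graph.Walk x y → H.Reachable x y := by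
      intro x y p
      induction p with
      | nil => exact SimpleGraph.Reachable.refl _
      | @cons a b c h p ih =>
        refine SimpleGraph.Reachable.trans ?_ ih
        by_cases he : s(a, b) = s(v, w)
        · rw [Sym2.eq_iff] at he
          rcases he with ⟨rfl, rfl⟩ | ⟨rfl, rfl⟩
          · exact hreach
          · exact hreach.symm
        · refine SimpleGraph.Adj.reachable ?_
          rw [hH, SimpleGraph.sdiff_adj]
          refine ⟨h, ?_⟩
          rw [SimpleGraph.fromEdgeSet_adj]
          intro hcon
          rw [Set.mem_singleton_iff] at hcon
          exact he hcon.1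
    have hHconn : H.Connected := by
      haveI : Nonempty (Fin G.N) := ⟨G.root⟩
      refine SimpleGraph.Connected.mk ?_
      intro x y
      exact (G.conn.preconnected x y).elim (hstep x y)
    have hle := conn_card_le H hHconn
    have hsub : H.edgeFinset ⊆ G.graph.edgeFinset.erase s(v, w) := by
      intro e he
      rw [SimpleGraph.mem_edgeFinset] at he
      rw [hH, SimpleGraph.edgeSet_sdiff, Set.mem_diff] at he
      rw [Finset.mem_erase, SimpleGraph.mem_edgeFinset]
      refine ⟨?_, he.1⟩
      intro hcon
      apply he.2
      rw [SimpleGraph.edgeSet_fromEdgeSet, Set.mem_diff]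
      refine ⟨by rw [hcon]; exact Set.mem_singleton _, ?_⟩
      rw [hcon]
      simp only [Sym2.mem_diagSet, Set.mem_setOf_eq, Sym2.isDiag_iff_proj_eq]
      exact hvw.ne
    have hvwmem : s(v, w) ∈ G.graph.edgeFinset := by
      rw [SimpleGraph.mem_edgeFinset, SimpleGraph.mem_edgeSet]; exact hvw
    have hcard2 := Finset.card_le_card hsub
    rw [Finset.card_erase_of_mem hvwmem] at hcard2
    have hec := G.edge_count
    rw [Fintype.card_fin] at hle
    have h1 : 1 ≤ G.graph.edgeFinset.card := by
      apply Finset.card_pos.2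
      exact ⟨_, hvwmem⟩
    simp only [edgeFinset_card_natCard] at hle hec hcard2 h1
    omega

lemma no_triangle {a b c : Fin G.N} (h1 : G.graph.Adj a b) (h2 : G.graph.Adj b c)
    (h3 : G.graph.Adj a c) : False := by
  have hT := G.isTree
  have hA := hT.2
  apply hA (SimpleGraph.Walk.cons h1 (SimpleGraph.Walk.cons h2
    (SimpleGraph.Walk.cons h3.symm SimpleGraph.Walk.nil)))
  have hne : a ≠ b := h1.ne
  have hbc : b ≠ c := h2.ne
  have hac : a ≠ c := h3.ne
  rw [SimpleGraph.Walk.isCycle_def]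
  refine ⟨?_, by simp, ?_⟩
  · rw [SimpleGraph.Walk.isTrail_def]
    simp only [SimpleGraph.Walk.edges_cons, SimpleGraph.Walk.edges_nil, List.nodup_cons,
      List.mem_cons, List.mem_singleton, List.not_mem_nil, or_false, List.nodup_nil, and_true,
      Sym2.eq_iff, not_or]
    refine ⟨⟨?_, ?_⟩, ?_⟩ <;> tauto
  · simp only [SimpleGraph.Walk.support_cons, SimpleGraph.Walk.support_nil, List.tail_cons,
      List.nodup_cons, List.mem_cons, List.mem_singleton, List.not_mem_nil, or_false,
      List.nodup_nil, and_true]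
    tauto

end DualGraph
end

noncomputable section
namespace DualGraph

variable (G : DualGraph)

lemma dist_eq (a b : Fin G.N) : G.dist a b = G.graph.dist a b := rfl

lemma mem_pathSet {a b x : Fin G.N} :
    x ∈ G.pathSet a b ↔ G.graph.dist a x + G.graph.dist x b = G.graph.dist a b := by
  rw [pathSet, Finset.mem_filter]
  simp only [Finset.mem_univ, true_and]
  rfl

lemma left_mem_pathSet (a b : Fin G.N) : a ∈ G.pathSet a b := by
  rw [G.mem_pathSet, SimpleGraph.dist_self]; omega

lemma right_mem_pathSet (a b : Fin G.N) : b ∈ G.pathSet a b := by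
  rw [G.mem_pathSet, SimpleGraph.dist_self]; omega

lemma pathSet_comm {a b x : Fin G.N} : x ∈ G.pathSet a b ↔ x ∈ G.pathSet b a := by
  rw [G.mem_pathSet, G.mem_pathSet]
  rw [SimpleGraph.dist_comm (u := a) (v := x), SimpleGraph.dist_comm (u := x) (v := b),
    SimpleGraph.dist_comm (u := a) (v := b)]
  omega

lemma mem_pathSet_self {a x : Fin G.N} : x ∈ G.pathSet a a ↔ x = a := by
  rw [G.mem_pathSet, SimpleGraph.dist_self]
  constructor
  · intro h
    have h1 : G.graph.dist a x = 0 := by omega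
    exact ((G.conn.dist_eq_zero_iff).1 h1).symm
  · intro h; subst h; simp [SimpleGraph.dist_self]

lemma isPath_length_eq {a b : Fin G.N} (p : G.graph.Walk a b) (hp : p.IsPath) :
    p.length = G.graph.dist a b := by
  obtain ⟨q, hq, hql⟩ := G.conn.exists_path_of_dist a b
  have := (G.isTree.existsUnique_path a b).unique hp hq
  rw [this, hql]

lemma mem_pathSet_iff_support {a b x : Fin G.N} (p : G.graph.Walk a b) (hp : p.IsPath) :
    x ∈ G.pathSet a b ↔ x ∈ p.support := by
  constructor
  · intro hx
    rw [G.mem_pathSet] at hx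
    obtain ⟨w1, h1⟩ := G.conn.exists_walk_length_eq_dist a x
    obtain ⟨w2, h2⟩ := G.conn.exists_walk_length_eq_dist x b
    have hlen : (w1.append w2).length = G.graph.dist a b := by
      rw [SimpleGraph.Walk.length_append, h1, h2]; exact hx
    have hpath := SimpleGraph.Walk.isPath_of_length_eq_dist _ hlen
    have hEq := (G.isTree.existsUnique_path a b).unique hp hpath
    rw [hEq, SimpleGraph.Walk.mem_support_append_iff]
    exact Or.inl w1.end_mem_support
  · intro hx
    rw [G.mem_pathSet]
    have h1 : G.graph.dist a x ≤ (p.takeUntil x hx).length := SimpleGraph.dist_le _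
    have h2 : G.graph.dist x b ≤ (p.dropUntil x hx).length := SimpleGraph.dist_le _
    have h3 : (p.takeUntil x hx).length + (p.dropUntil x hx).length = p.length := by
      rw [← SimpleGraph.Walk.length_append, SimpleGraph.Walk.take_spec]
    have h4 : p.length = G.graph.dist a b := G.isPath_length_eq p hp
    have h5 : G.graph.dist a b ≤ G.graph.dist a x + G.graph.dist x b := G.conn.dist_triangle
    omega

lemma pathSet_trans {a b c x : Fin G.N} (hx : x ∈ G.pathSet a c) :
    x ∈ G.pathSet a b ∨ x ∈ G.pathSet b c := by
  obtain ⟨p, hp, _⟩ := G.conn.exists_path_of_dist a b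
  obtain ⟨q, hq, _⟩ := G.conn.exists_path_of_dist b c
  rw [G.mem_pathSet_iff_support ((p.append q).toPath : G.graph.Path a c).1
    ((p.append q).toPath).2] at hx
  have hsub := SimpleGraph.Walk.support_toPath_subset (p.append q)
  have hx2 := hsub hx
  rw [SimpleGraph.Walk.mem_support_append_iff] at hx2
  rcases hx2 with h | h
  · left; rwa [G.mem_pathSet_iff_support p hp]
  · right; rwa [G.mem_pathSet_iff_support q hq]

lemma pathSet_adj {a b x : Fin G.N} (hab : G.graph.Adj a b) (hx : x ∈ G.pathSet a b) :
    x = a ∨ x = b := by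
  rw [G.mem_pathSet] at hx
  have hd : G.graph.dist a b = 1 := SimpleGraph.dist_eq_one_iff_adj.2 hab
  rcases Nat.eq_zero_or_pos (G.graph.dist a x) with h | h
  · left; exact ((G.conn.dist_eq_zero_iff).1 h).symm
  · right
    have h2 : G.graph.dist x b = 0 := by omega
    exact (G.conn.dist_eq_zero_iff).1 h2

lemma takeUntil_getVert_one {c a x : Fin G.N} (p : G.graph.Walk c a) (hx : x ∈ p.support)
    (hxc : x ≠ c) : (p.takeUntil x hx).getVert 1 = p.getVert 1 := by
  have hspec := SimpleGraph.Walk.take_spec p hx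
  have hlen : 0 < (p.takeUntil x hx).length := by
    rcases Nat.eq_zero_or_pos (p.takeUntil x hx).length with h | h
    · exact absurd (SimpleGraph.Walk.eq_of_length_eq_zero h).symm hxc
    · exact h
  conv_rhs => rw [← hspec]
  rw [SimpleGraph.Walk.getVert_append]
  by_cases h : 1 < (p.takeUntil x hx).length
  · rw [if_pos h]
  · rw [if_neg h]
    have h1 : (p.takeUntil x hx).length = 1 := by omega
    rw [show 1 - (p.takeUntil x hx).length = 0 from by omega, SimpleGraph.Walk.getVert_zero]
    conv_lhs => rw [← h1]
    rw [SimpleGraph.Walk.getVert_length]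

lemma second_vertex_eq {c a b x : Fin G.N} (p : G.graph.Walk c a) (q : G.graph.Walk c b)
    (hp : p.IsPath) (hq : q.IsPath) (hx1 : x ∈ p.support) (hx2 : x ∈ q.support) (hxc : x ≠ c) :
    p.getVert 1 = q.getVert 1 := by
  have e := (G.isTree.existsUnique_path c x).unique (hp.takeUntil hx1) (hq.takeUntil hx2)
  have e1 := G.takeUntil_getVert_one p hx1 hxc
  have e2 := G.takeUntil_getVert_one q hx2 hxc
  rw [← e1, ← e2, e]

lemma gate {c a b : Fin G.N} (hc : c ∉ G.pathSet a b) :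
    ∃ c₁ : Fin G.N, G.graph.Adj c c₁ ∧ c₁ ∈ G.pathSet c a ∧ c₁ ∈ G.pathSet c b := by
  have hca : c ≠ a := fun h => hc (h ▸ G.left_mem_pathSet a b)
  have hcb : c ≠ b := fun h => hc (h ▸ G.right_mem_pathSet a b)
  obtain ⟨p, hp, hpl⟩ := G.conn.exists_path_of_dist c a
  obtain ⟨q, hq, hql⟩ := G.conn.exists_path_of_dist c b
  have hppos : 0 < p.length := by rw [hpl]; exact G.conn.pos_dist_of_ne hca
  have hqpos : 0 < q.length := by rw [hql]; exact G.conn.pos_dist_of_ne hcb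
  have hpnil : ¬ p.Nil := SimpleGraph.Walk.not_nil_iff_lt_length.2 hppos
  have hadj1 : G.graph.Adj c (p.getVert 1) := SimpleGraph.Walk.adj_snd hpnil
  have hp1mem : p.getVert 1 ∈ p.support :=
    SimpleGraph.Walk.mem_support_iff_exists_getVert.2 ⟨1, rfl, by omega⟩
  have hq1mem : q.getVert 1 ∈ q.support :=
    SimpleGraph.Walk.mem_support_iff_exists_getVert.2 ⟨1, rfl, by omega⟩
  by_cases he : p.getVert 1 = q.getVert 1
  · refine ⟨p.getVert 1, hadj1, ?_, ?_⟩
    · rw [G.mem_pathSet_iff_support p hp]; exact hp1mem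
    · rw [G.mem_pathSet_iff_support q hq, he]; exact hq1mem
  · exfalso
    have hdisj : ∀ x, x ∈ p.support → x ∈ q.support → x = c := by
      intro x h1 h2
      by_contra hxc
      exact he (G.second_vertex_eq p q hp hq h1 h2 hxc)
    have hctail : c ∉ q.support.tail := by
      intro hcon
      have := hq.support_nodup
      rw [q.support_eq_cons] at this
      rw [List.nodup_cons] at this
      exact this.1 hcon
    have hpath : (p.reverse.append q).IsPath := by
      rw [SimpleGraph.Walk.isPath_def, SimpleGraph.Walk.support_append]
      apply List.Nodup.append
      · rw [SimpleGraph.Walk.support_reverse]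
        exact List.nodup_reverse.2 hp.support_nodup
      · have := hq.support_nodup
        rw [q.support_eq_cons, List.nodup_cons] at this
        exact this.2
      · intro x hx1 hx2
        rw [SimpleGraph.Walk.support_reverse, List.mem_reverse] at hx1
        have hxq : x ∈ q.support := List.mem_of_mem_tail hx2
        have hxc := hdisj x hx1 hxq
        subst hxc
        exact hctail hx2
    apply hc
    rw [G.mem_pathSet_iff_support (p.reverse.append q) hpath,
      SimpleGraph.Walk.mem_support_append_iff]
    left
    rw [SimpleGraph.Walk.support_reverse, List.mem_reverse]
    exact p.start_mem_support

lemma first_step {c a : Fin G.N} (hca : c ≠ a) :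
    ∃ c₁ : Fin G.N, G.graph.Adj c c₁ ∧ c₁ ∈ G.pathSet c a ∧
      G.graph.dist c a = G.graph.dist c₁ a + 1 := by
  obtain ⟨p, hp, hpl⟩ := G.conn.exists_path_of_dist c a
  have hppos : 0 < p.length := by rw [hpl]; exact G.conn.pos_dist_of_ne hca
  have hpnil : ¬ p.Nil := SimpleGraph.Walk.not_nil_iff_lt_length.2 hppos
  have hadj1 : G.graph.Adj c (p.getVert 1) := SimpleGraph.Walk.adj_snd hpnil
  have hp1mem : p.getVert 1 ∈ p.support :=
    SimpleGraph.Walk.mem_support_iff_exists_getVert.2 ⟨1, rfl, by omega⟩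
  have hmem : p.getVert 1 ∈ G.pathSet c a := by
    rw [G.mem_pathSet_iff_support p hp]; exact hp1mem
  refine ⟨p.getVert 1, hadj1, hmem, ?_⟩
  rw [G.mem_pathSet] at hmem
  have hd1 : G.graph.dist c (p.getVert 1) = 1 := SimpleGraph.dist_eq_one_iff_adj.2 hadj1
  omega

end DualGraph
end

noncomputable section
namespace DualGraph

variable (G : DualGraph)

lemma eqlem_aux (ν j i : Fin G.N) (A : Finset (Fin G.N))
    (hiA : i ∈ A) (hjA : j ∉ A) (hνA : ν ∉ A)
    (hcl : ∀ a ∈ A, ∀ b, G.adj a b → b ∈ A ∨ b = ν) :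
    G.V ν ν * G.V i j = G.V j ν * G.V i ν := by
  set z : Fin G.N → ℚ := fun b => G.V ν ν * G.V b j - G.V j ν * G.V b ν with hz
  have hMz : ∀ a, ((G.Pᵀ * G.P) *ᵥ z) a
      = G.V ν ν * (if a = j then 1 else 0) - G.V j ν * (if a = ν then 1 else 0) := by
    intro a
    rw [Matrix.mulVec, dotProduct]
    have h1 : ∀ b, (G.Pᵀ * G.P) a b * z b
        = G.V ν ν * ((G.Pᵀ * G.P) a b * G.V b j)
          - G.V j ν * ((G.Pᵀ * G.P) a b * G.V b ν) := by
      intro b; rw [hz]; ring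
    rw [Finset.sum_congr rfl fun b _ => h1 b, Finset.sum_sub_distrib,
      ← Finset.mul_sum, ← Finset.mul_sum]
    have h2 : (∑ b, (G.Pᵀ * G.P) a b * G.V b j) = (1 : Matrix (Fin G.N) (Fin G.N) ℚ) a j := by
      rw [← Matrix.mul_apply, G.M_mul_V]
    have h3 : (∑ b, (G.Pᵀ * G.P) a b * G.V b ν) = (1 : Matrix (Fin G.N) (Fin G.N) ℚ) a ν := by
      rw [← Matrix.mul_apply, G.M_mul_V]
    rw [h2, h3, Matrix.one_apply, Matrix.one_apply]
  have hzν : z ν = 0 := by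
    rw [hz]
    simp only
    rw [G.V_symm ν j]
    ring
  set y : Fin G.N → ℚ := fun b => if b ∈ A then z b else 0 with hy
  have hMy : ∀ a ∈ A, ((G.Pᵀ * G.P) *ᵥ y) a = 0 := by
    intro a ha
    have h1 : ∀ b, (G.Pᵀ * G.P) a b * y b = (G.Pᵀ * G.P) a b * z b := by
      intro b
      by_cases hb : b ∈ A
      · rw [hy]; simp [hb]
      · rw [hy]; simp only [hb, if_false, mul_zero]
        by_cases hbν : b = ν
        · subst hbν; rw [hzν, mul_zero]
        · have hab : a ≠ b := fun h => hb (h ▸ ha)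
          have hM0 : (G.Pᵀ * G.P) a b = 0 := by
            rw [G.M_of_ne hab, if_neg]
            intro hadj
            rcases hcl a ha b hadj with h | h
            exacts [hb h, hbν h]
          rw [hM0, zero_mul]
    have h2 : ((G.Pᵀ * G.P) *ᵥ y) a = ((G.Pᵀ * G.P) *ᵥ z) a := by
      rw [Matrix.mulVec, Matrix.mulVec, dotProduct, dotProduct]
      exact Finset.sum_congr rfl fun b _ => h1 b
    rw [h2, hMz]
    have haj : a ≠ j := fun h => hjA (h ▸ ha)
    have haν : a ≠ ν := fun h => hνA (h ▸ ha)
    simp [haj, haν]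
  have hquad : y ᵥ* (G.Pᵀ * G.P) ⬝ᵥ y = 0 := by
    have hvm : y ᵥ* (G.Pᵀ * G.P) = (G.Pᵀ * G.P) *ᵥ y := by
      funext a
      rw [Matrix.vecMul, Matrix.mulVec, dotProduct, dotProduct]
      exact Finset.sum_congr rfl fun b _ => by rw [G.M_symm b a]; ring
    rw [hvm, dotProduct]
    apply Finset.sum_eq_zero
    intro a _
    by_cases ha : a ∈ A
    · rw [hMy a ha, zero_mul]
    · rw [hy]; simp [ha]
  have hy0 : y = 0 := by
    by_contra h
    exact absurd hquad (ne_of_gt (G.quadM_pos h))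
  have hzi := congrFun hy0 i
  rw [hy] at hzi
  simp only [hiA, if_true, Pi.zero_apply] at hzi
  rw [hz] at hzi
  have : G.V ν ν * G.V i j - G.V j ν * G.V i ν = 0 := hzi
  linarith

lemma pathSet_eq_mul {ν j i : Fin G.N} (hν : ν ∈ G.pathSet j i) :
    G.V ν ν * G.V i j = G.V j ν * G.V i ν := by
  by_cases hνi : ν = i
  · subst hνi; rw [G.V_symm ν j]; ring
  by_cases hνj : ν = j
  · subst hνj; ring
  apply G.eqlem_aux ν j i (Finset.univ.filter (fun a => ν ∉ G.pathSet a i))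
  · simp only [Finset.mem_filter, Finset.mem_univ, true_and]
    rw [G.mem_pathSet_self]
    exact hνi
  · simp only [Finset.mem_filter, Finset.mem_univ, true_and, not_not]
    exact hν
  · simp only [Finset.mem_filter, Finset.mem_univ, true_and, not_not]
    exact G.left_mem_pathSet ν i
  · intro a ha b hadj
    simp only [Finset.mem_filter, Finset.mem_univ, true_and] at ha
    by_cases hbν : b = ν
    · exact Or.inr hbν
    · left
      simp only [Finset.mem_filter, Finset.mem_univ, true_and]
      intro hcon
      rcases G.pathSet_trans (a := b) (b := a) (c := i) hcon with h | h
      · rcases G.pathSet_adj (show G.graph.Adj a b from hadj).symm h with h1 | h1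
        · exact hbν h1.symm
        · rw [← h1] at ha
          exact ha (G.left_mem_pathSet ν i)
      · exact ha h
  
lemma ML (j i ν : Fin G.N) :
    G.V j ν * G.V i ν ≤ G.V ν ν * G.V i j ∧
    (ν ∈ G.pathSet j i ↔ G.V j ν * G.V i ν = G.V ν ν * G.V i j) := by
  suffices H : ∀ n : ℕ, ∀ ν : Fin G.N, G.graph.dist ν j ≤ n →
      (G.V j ν * G.V i ν ≤ G.V ν ν * G.V i j ∧
        (ν ∈ G.pathSet j i ↔ G.V j ν * G.V i ν = G.V ν ν * G.V i j)) from
    H (G.graph.dist ν j) ν le_rfl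
  intro n
  induction n with
  | zero =>
    intro ν hn
    have hνj : ν = j := (G.conn.dist_eq_zero_iff).1 (Nat.le_zero.1 hn)
    subst hνj
    have hν : ν ∈ G.pathSet ν i := G.left_mem_pathSet ν i
    have he := G.pathSet_eq_mul hν
    exact ⟨le_of_eq (by linarith), ⟨fun _ => by linarith, fun _ => hν⟩⟩
  | succ n ih =>
    intro ν hn
    by_cases hν : ν ∈ G.pathSet j i
    · have he := G.pathSet_eq_mul hν
      exact ⟨le_of_eq (by linarith), ⟨fun _ => by linarith, fun _ => hν⟩⟩
    · have hνj : ν ≠ j := fun h => hν (h ▸ G.left_mem_pathSet j i)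
      obtain ⟨ν₁, hadj, hν₁j, hν₁i⟩ := G.gate (c := ν) (a := j) (b := i) hν
      have hd : G.graph.dist ν j = G.graph.dist ν₁ j + 1 := by
        rw [G.mem_pathSet] at hν₁j
        have h1 : G.graph.dist ν ν₁ = 1 := SimpleGraph.dist_eq_one_iff_adj.2 hadj
        omega
      have IH := (ih ν₁ (by omega)).1
      have e1 : G.V ν₁ ν₁ * G.V ν j = G.V j ν₁ * G.V ν ν₁ :=
        G.pathSet_eq_mul (G.pathSet_comm.1 hν₁j)
      have e2 : G.V ν₁ ν₁ * G.V i ν = G.V ν ν₁ * G.V i ν₁ :=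
        G.pathSet_eq_mul hν₁i
      have hCS : G.V ν ν₁ ^ 2 < G.V ν ν * G.V ν₁ ν₁ := G.cs_strict hadj.ne
      have hsym : G.V j ν = G.V ν j := G.V_symm _ _
      have hpos1 : 0 < G.V ν₁ ν₁ := G.V_pos _ _
      have hpos2 : 0 < G.V i j := G.V_pos _ _
      have key : G.V ν₁ ν₁ ^ 2 * (G.V j ν * G.V i ν)
          < G.V ν₁ ν₁ ^ 2 * (G.V ν ν * G.V i j) := by
        calc G.V ν₁ ν₁ ^ 2 * (G.V j ν * G.V i ν)
            = (G.V ν₁ ν₁ * G.V ν j) * (G.V ν₁ ν₁ * G.V i ν) := by rw [hsym]; ring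
          _ = (G.V j ν₁ * G.V ν ν₁) * (G.V ν ν₁ * G.V i ν₁) := by rw [e1, e2]
          _ = (G.V j ν₁ * G.V i ν₁) * G.V ν ν₁ ^ 2 := by ring
          _ ≤ (G.V ν₁ ν₁ * G.V i j) * G.V ν ν₁ ^ 2 :=
              mul_le_mul_of_nonneg_right IH (sq_nonneg _)
          _ < (G.V ν₁ ν₁ * G.V i j) * (G.V ν ν * G.V ν₁ ν₁) :=
              mul_lt_mul_of_pos_left hCS (by positivity)
          _ = G.V ν₁ ν₁ ^ 2 * (G.V ν ν * G.V i j) := by ring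
      have hstrict : G.V j ν * G.V i ν < G.V ν ν * G.V i j :=
        lt_of_mul_lt_mul_left key (by positivity)
      exact ⟨le_of_lt hstrict, ⟨fun h => absurd h hν, fun h => absurd h (ne_of_lt hstrict)⟩⟩

end DualGraph
end

noncomputable section
namespace DualGraph

variable (G : DualGraph)

lemma mem_nbrs {μ ν : Fin G.N} : ν ∈ G.nbrs μ ↔ G.adj μ ν := by
  rw [nbrs, Finset.mem_filter]
  simp only [Finset.mem_univ, true_and]

lemma mem_branch {μ ν η : Fin G.N} :
    η ∈ G.branch μ ν ↔ ν ≠ μ ∧ η ≠ μ ∧ μ ∉ G.pathSet ν η := by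
  rw [branch, Finset.mem_filter]
  simp only [Finset.mem_univ, true_and]

lemma adj_graph {μ ν : Fin G.N} (h : G.adj μ ν) : G.graph.Adj μ ν := h

lemma self_mem_branch {μ i : Fin G.N} (h : G.adj μ i) : i ∈ G.branch μ i := by
  rw [mem_branch]
  refine ⟨Ne.symm h.1, Ne.symm h.1, ?_⟩
  intro hcon
  exact h.1 (G.mem_pathSet_self.1 hcon)

lemma dist_two_of_nbrs {μ ν i : Fin G.N} (hν : G.adj μ ν) (hi : G.adj μ i) (hne : ν ≠ i) :
    μ ∈ G.pathSet ν i := by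
  rw [G.mem_pathSet]
  have h1 : G.graph.dist ν μ = 1 := SimpleGraph.dist_eq_one_iff_adj.2 (G.adj_graph hν).symm
  have h2 : G.graph.dist μ i = 1 := SimpleGraph.dist_eq_one_iff_adj.2 (G.adj_graph hi)
  have h3 : G.graph.dist ν i ≤ G.graph.dist ν μ + G.graph.dist μ i := G.conn.dist_triangle
  have h4 : G.graph.dist ν i ≠ 0 := fun h => hne ((G.conn.dist_eq_zero_iff).1 h)
  have h5 : G.graph.dist ν i ≠ 1 := by
    intro h
    exact G.no_triangle (G.adj_graph hν) (SimpleGraph.dist_eq_one_iff_adj.1 h)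
      (G.adj_graph hi)
  omega

lemma branch_eq_of_nbrs {μ ν i : Fin G.N} (hν : G.adj μ ν) (hi : G.adj μ i)
    (hb : i ∈ G.branch μ ν) : ν = i := by
  by_contra hne
  rw [mem_branch] at hb
  exact hb.2.2 (G.dist_two_of_nbrs hν hi hne)

lemma gate_mem {μ ν j : Fin G.N} (hν : G.adj μ ν) (hj : j ∈ G.branch μ ν) :
    ν ∈ G.pathSet μ j := by
  rw [mem_branch] at hj
  obtain ⟨c₁, hc₁, hpν, hpj⟩ := G.gate hj.2.2
  rcases G.pathSet_adj (G.adj_graph hν) hpν with h | h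
  · exact absurd h hc₁.ne'
  · rwa [← h]

lemma branch_exists {μ i : Fin G.N} (hi : i ≠ μ) :
    ∃ ν, G.adj μ ν ∧ i ∈ G.branch μ ν := by
  obtain ⟨ν, hadj, hmem, hd⟩ := G.first_step (Ne.symm hi)
  refine ⟨ν, hadj, ?_⟩
  rw [mem_branch]
  refine ⟨hadj.1.symm, hi, ?_⟩
  intro hcon
  rw [G.mem_pathSet] at hcon
  have h1 : G.graph.dist ν μ = 1 := SimpleGraph.dist_eq_one_iff_adj.2 (G.adj_graph hadj).symm
  omega

lemma branch_unique {μ i ν ν' : Fin G.N} (hν : G.adj μ ν) (hν' : G.adj μ ν')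
    (h1 : i ∈ G.branch μ ν) (h2 : i ∈ G.branch μ ν') : ν = ν' := by
  by_contra hne
  rw [mem_branch] at h1 h2
  have hp := G.dist_two_of_nbrs hν hν' hne
  rcases G.pathSet_trans (a := ν) (b := i) (c := ν') hp with h | h
  · exact h1.2.2 h
  · exact h2.2.2 (G.pathSet_comm.1 h)

lemma center_pathSet {μ ν j x : Fin G.N} (hν : G.adj μ ν) (hj : j ∈ G.branch μ ν)
    (hx : x = μ ∨ G.adj μ x) : ν ∈ G.pathSet j x := by
  by_cases hxν : x = ν
  · subst hxν; exact G.right_mem_pathSet j x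
  rcases hx with rfl | hadjx
  · exact G.pathSet_comm.1 (G.gate_mem hν hj)
  · -- x adjacent to μ, x ≠ ν
    have hμiν : μ ∈ G.pathSet x ν := G.dist_two_of_nbrs hadjx hν hxν
    have hμxj : μ ∈ G.pathSet x j := by
      by_contra hcon
      rcases G.pathSet_trans (a := x) (b := j) (c := ν) hμiν with h | h
      · exact hcon h
      · rw [mem_branch] at hj
        exact hj.2.2 (G.pathSet_comm.1 h)
    -- distances
    have hgate := G.gate_mem hν hj
    rw [G.mem_pathSet] at hμiν hμxj hgate ⊢
    have d1 : G.graph.dist x μ = 1 := SimpleGraph.dist_eq_one_iff_adj.2 (G.adj_graph hadjx).symm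
    have d2 : G.graph.dist μ ν = 1 := SimpleGraph.dist_eq_one_iff_adj.2 (G.adj_graph hν)
    have d3 : G.graph.dist j ν = G.graph.dist ν j := SimpleGraph.dist_comm
    have d4 : G.graph.dist j x = G.graph.dist x j := SimpleGraph.dist_comm
    have d5 : G.graph.dist ν x = G.graph.dist x ν := SimpleGraph.dist_comm
    omega

lemma rho_eq (a b c : Fin G.N) : G.rho a b c = G.V b c / G.V a c := rfl

lemma rhat_vecMul_apply (ν j x : Fin G.N) :
    (G.rhat ν j ᵥ* G.V) x = G.V j x - (G.V j ν / G.V ν ν) * G.V ν x := by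
  have : (G.rhat ν j ᵥ* G.V) x = ∑ b, G.rhat ν j b * G.V b x := rfl
  rw [this]
  have h1 : ∀ b, G.rhat ν j b * G.V b x
      = (if b = j then G.V b x else 0) - (G.V j ν / G.V ν ν) * (if b = ν then G.V b x else 0) := by
    intro b
    simp only [rhat, rho]
    rcases eq_or_ne b j with rfl | hb1
    · rcases eq_or_ne b ν with rfl | hb2
      · rw [div_self (G.V_ne b b)]; simp
      · simp [hb2]
    · rcases eq_or_ne b ν with rfl | hb2
      · simp [hb1]
      · simp [hb1, hb2]
  rw [Finset.sum_congr rfl fun b _ => h1 b, Finset.sum_sub_distrib, ← Finset.mul_sum]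
  rw [Finset.sum_ite_eq' Finset.univ j (fun b => G.V b x),
    Finset.sum_ite_eq' Finset.univ ν (fun b => G.V b x)]
  simp

lemma rhat_key (ν j x : Fin G.N) :
    0 ≤ (G.rhat ν j ᵥ* G.V) x ∧ (0 < (G.rhat ν j ᵥ* G.V) x ↔ x ∈ G.branch ν j) := by
  have hval : (G.rhat ν j ᵥ* G.V) x
      = (G.V ν ν * G.V x j - G.V j ν * G.V x ν) / G.V ν ν := by
    rw [G.rhat_vecMul_apply]
    rw [G.V_symm j x, G.V_symm ν x, sub_div]
    congr 1
    · rw [mul_comm (G.V ν ν) (G.V x j), mul_div_assoc, div_self (G.V_ne ν ν), mul_one]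
    · rw [div_mul_eq_mul_div]
  obtain ⟨hle, hiff⟩ := G.ML j x ν
  have hpos := G.V_pos ν ν
  constructor
  · rw [hval]
    apply div_nonneg _ (le_of_lt hpos)
    linarith
  · rw [hval]
    constructor
    · intro h
      have hne : G.V j ν * G.V x ν ≠ G.V ν ν * G.V x j := by
        intro he
        rw [he] at h
        simp at h
      have hν : ν ∉ G.pathSet j x := fun hc => hne (hiff.1 hc)
      rw [mem_branch]
      refine ⟨?_, ?_, hν⟩
      · intro hjν
        subst hjν
        exact hν (G.left_mem_pathSet j x)
      · intro hxν
        subst hxν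
        exact hν (G.right_mem_pathSet j x)
    · intro hb
      rw [mem_branch] at hb
      have hν : ν ∉ G.pathSet j x := hb.2.2
      have hne : G.V j ν * G.V x ν ≠ G.V ν ν * G.V x j := fun he => hν (hiff.2 he)
      have hlt : G.V j ν * G.V x ν < G.V ν ν * G.V x j := lt_of_le_of_ne hle hne
      apply div_pos _ hpos
      linarith

lemma rhat_zero_iff (ν j x : Fin G.N) :
    (G.rhat ν j ᵥ* G.V) x = 0 ↔ x ∉ G.branch ν j := by
  obtain ⟨hle, hiff⟩ := G.rhat_key ν j x
  constructor
  · intro h hb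
    rw [← hiff] at hb
    linarith
  · intro h
    rcases lt_or_eq_of_le hle with hlt | he
    · exact absurd (hiff.1 hlt) h
    · exact he.symm

end DualGraph
end
/-- Entries of the transform `f̂_{⟨ĝ⟩[ĥ]}` and behaviour of the valuation
vectors of `f̂_{⟨ĝ⟩}` and `f̂_{[ĥ]}`. -/
theorem stmt6 (G : DualGraph) (μ : Fin G.N) (fh gh hh : Fin G.N → ℚ) :
    (G.transform μ fh gh hh μ = fh μ - ∑ ν ∈ G.nbrs μ, G.rho μ ν μ * hh ν) ∧
    (∀ i ∈ G.nbrs μ, G.transform μ fh gh hh i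
        = fh i + hh i + ∑ j ∈ (G.branch μ i).erase i, G.rho i j μ * gh j) ∧
    (∀ i, i ≠ μ → i ∉ G.nbrs μ → G.transform μ fh gh hh i = fh i - gh i) ∧
    (∀ i, (G.transform μ fh gh 0 ᵥ* G.V) i
        = (fh ᵥ* G.V) i
          - ∑ ν ∈ G.nbrs μ, ∑ j ∈ G.branch μ ν, gh j * G.phi μ ν j i * G.V μ i) ∧
    ((∀ j, 0 ≤ gh j) → ∀ i,
      (G.transform μ fh gh 0 ᵥ* G.V) i ≤ (fh ᵥ* G.V) i ∧
      (G.dist μ i ≤ 1 → (G.transform μ fh gh 0 ᵥ* G.V) i = (fh ᵥ* G.V) i) ∧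
      ((G.transform μ fh gh 0 ᵥ* G.V) i < (fh ᵥ* G.V) i ↔
        ∃ ν ∈ G.nbrs μ, ∃ j ∈ G.branch μ ν, 0 < gh j ∧ i ∈ G.branch ν j)) ∧
    (∀ i, (G.transform μ fh 0 hh ᵥ* G.V) i
        = (fh ᵥ* G.V) i + ∑ ν ∈ G.nbrs μ, hh ν * G.phi μ μ ν i * G.V μ i) ∧
    ((∀ j, 0 ≤ hh j) → ∀ i,
      (fh ᵥ* G.V) i ≤ (G.transform μ fh 0 hh ᵥ* G.V) i ∧
      ((fh ᵥ* G.V) i < (G.transform μ fh 0 hh ᵥ* G.V) i ↔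
        ∃ ν ∈ G.nbrs μ, 0 < hh ν ∧ i ∈ G.branch μ ν)) := by
  classical
  have hphi : ∀ η a b c : Fin G.N, G.phi η a b c = (G.rhat a b ᵥ* G.V) c / G.V η c :=
    fun _ _ _ _ => rfl
  have hrhat : ∀ a b x : Fin G.N, G.rhat a b x
      = (if x = b then 1 else 0) - G.rho a b a * (if x = a then 1 else 0) := fun a b x => rfl
  have hval : ∀ (fh' gh' hh' : Fin G.N → ℚ) (x), G.transform μ fh' gh' hh' x
      = fh' x - (∑ ν ∈ G.nbrs μ, ∑ j ∈ G.branch μ ν, gh' j * G.rhat ν j x)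
        + ∑ ν ∈ G.nbrs μ, hh' ν * G.rhat μ ν x := by
    intro fh' gh' hh' x
    rw [DualGraph.transform]
    simp only [Pi.add_apply, Pi.sub_apply, Finset.sum_apply, Pi.smul_apply, smul_eq_mul]
  -- Part 1
  have part1 : G.transform μ fh gh hh μ = fh μ - ∑ ν ∈ G.nbrs μ, G.rho μ ν μ * hh ν := by
    rw [hval]
    have hT1 : (∑ ν ∈ G.nbrs μ, ∑ j ∈ G.branch μ ν, gh j * G.rhat ν j μ) = 0 := by
      apply Finset.sum_eq_zero; intro ν hν
      apply Finset.sum_eq_zero; intro j hj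
      rw [G.mem_nbrs] at hν
      rw [G.mem_branch] at hj
      rw [hrhat, if_neg (fun h => hj.2.1 h.symm), if_neg hν.1]
      ring
    have hT2 : (∑ ν ∈ G.nbrs μ, hh ν * G.rhat μ ν μ)
        = - ∑ ν ∈ G.nbrs μ, G.rho μ ν μ * hh ν := by
      rw [← Finset.sum_neg_distrib]
      apply Finset.sum_congr rfl; intro ν hν
      rw [G.mem_nbrs] at hν
      rw [hrhat, if_neg hν.1, if_pos rfl]
      ring
    rw [hT1, hT2]; ring
  -- Part 2
  have part2 : ∀ i ∈ G.nbrs μ, G.transform μ fh gh hh i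
      = fh i + hh i + ∑ j ∈ (G.branch μ i).erase i, G.rho i j μ * gh j := by
    intro i hi
    have hadji : G.adj μ i := G.mem_nbrs.1 hi
    rw [hval]
    have hT2 : (∑ ν ∈ G.nbrs μ, hh ν * G.rhat μ ν i) = hh i := by
      have h1 : ∀ ν ∈ G.nbrs μ, hh ν * G.rhat μ ν i = if i = ν then hh ν else 0 := by
        intro ν hν
        rw [hrhat, if_neg (Ne.symm hadji.1)]
        rcases eq_or_ne i ν with rfl | hne
        · simp
        · simp [hne]
      rw [Finset.sum_congr rfl h1, Finset.sum_ite_eq, if_pos hi]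
    have hT1 : (∑ ν ∈ G.nbrs μ, ∑ j ∈ G.branch μ ν, gh j * G.rhat ν j i)
        = gh i - ∑ j ∈ G.branch μ i, gh j * G.rho i j i := by
      have hother : ∀ ν ∈ G.nbrs μ, ν ≠ i →
          (∑ j ∈ G.branch μ ν, gh j * G.rhat ν j i) = 0 := by
        intro ν hν hne
        apply Finset.sum_eq_zero; intro j hj
        have hiν : i ≠ ν := fun h => hne h.symm
        rcases eq_or_ne i j with rfl | hij
        · exact absurd (G.branch_eq_of_nbrs (G.mem_nbrs.1 hν) hadji hj) hne
        · rw [hrhat, if_neg hij, if_neg hiν]; ring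
      rw [Finset.sum_eq_single_of_mem i hi hother]
      have h2 : ∀ j ∈ G.branch μ i, gh j * G.rhat i j i
          = (if i = j then gh j else 0) - gh j * G.rho i j i := by
        intro j hj
        rw [hrhat, if_pos rfl]
        rcases eq_or_ne i j with rfl | hne
        · simp; ring
        · simp [hne]
      rw [Finset.sum_congr rfl h2, Finset.sum_sub_distrib, Finset.sum_ite_eq,
        if_pos (G.self_mem_branch hadji)]
    rw [hT1, hT2]
    have hrho1 : G.rho i i i = 1 := div_self (G.V_ne i i)
    have hterm : ∀ j ∈ (G.branch μ i).erase i, G.rho i j μ * gh j = gh j * G.rho i j i := by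
      intro j hj
      rw [Finset.mem_erase] at hj
      have hij : i ∈ G.pathSet j μ := G.pathSet_comm.1 (G.gate_mem hadji hj.2)
      have he := G.pathSet_eq_mul (ν := i) (j := j) (i := μ) hij
      have hre : G.rho i j i = G.rho i j μ := by
        rw [G.rho_eq, G.rho_eq, div_eq_div_iff (G.V_ne i i) (G.V_ne i μ)]
        rw [G.V_symm μ j, G.V_symm μ i] at he
        linear_combination -he
      rw [hre]; ring
    have hsum : (∑ j ∈ G.branch μ i, gh j * G.rho i j i)
        = (∑ j ∈ (G.branch μ i).erase i, G.rho i j μ * gh j) + gh i := by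
      rw [Finset.sum_congr rfl hterm]
      rw [← Finset.sum_erase_add (G.branch μ i) (fun j => gh j * G.rho i j i)
        (G.self_mem_branch hadji)]
      rw [hrho1, mul_one]
    rw [hsum]; ring
  -- Part 3
  have part3 : ∀ x, x ≠ μ → x ∉ G.nbrs μ → G.transform μ fh gh hh x = fh x - gh x := by
    intro x hxμ hxn
    rw [hval]
    have hT2 : (∑ ν ∈ G.nbrs μ, hh ν * G.rhat μ ν x) = 0 := by
      apply Finset.sum_eq_zero; intro ν hν
      have hxν : x ≠ ν := fun h => hxn (h ▸ hν)
      rw [hrhat, if_neg hxν, if_neg hxμ]; ring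
    obtain ⟨ν0, hν0adj, hν0b⟩ := G.branch_exists hxμ
    have hν0mem : ν0 ∈ G.nbrs μ := G.mem_nbrs.2 hν0adj
    have hT1 : (∑ ν ∈ G.nbrs μ, ∑ j ∈ G.branch μ ν, gh j * G.rhat ν j x) = gh x := by
      have hinner : ∀ ν ∈ G.nbrs μ, (∑ j ∈ G.branch μ ν, gh j * G.rhat ν j x)
          = if x ∈ G.branch μ ν then gh x else 0 := by
        intro ν hν
        have hxν : x ≠ ν := fun h => hxn (h ▸ hν)
        have h1 : ∀ j ∈ G.branch μ ν, gh j * G.rhat ν j x = if x = j then gh j else 0 := by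
          intro j hj
          rw [hrhat, if_neg hxν]
          rcases eq_or_ne x j with rfl | hne
          · simp
          · simp [hne]
        rw [Finset.sum_congr rfl h1, Finset.sum_ite_eq]
      rw [Finset.sum_congr rfl hinner]
      rw [Finset.sum_eq_single_of_mem ν0 hν0mem]
      · rw [if_pos hν0b]
      · intro ν hν hne
        rw [if_neg]
        intro hcon
        exact hne (G.branch_unique (G.mem_nbrs.1 hν) hν0adj hcon hν0b)
    rw [hT1, hT2]; ring
  -- representation lemmas for the vecMul parts
  have hzero : G.transform μ fh gh 0
      = fh - (∑ ν ∈ G.nbrs μ, ∑ j ∈ G.branch μ ν, gh j • G.rhat ν j) := by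
    rw [DualGraph.transform]
    simp
  have hzero2 : G.transform μ fh 0 hh
      = fh + (∑ ν ∈ G.nbrs μ, hh ν • G.rhat μ ν) := by
    rw [DualGraph.transform]
    simp
  have e0 : ∀ (w : Fin G.N → ℚ) (x), (w ᵥ* G.V) x = ∑ b, w b * G.V b x := fun w x => rfl
  have hvec : ∀ x, ((∑ ν ∈ G.nbrs μ, ∑ j ∈ G.branch μ ν, gh j • G.rhat ν j) ᵥ* G.V) x
      = ∑ ν ∈ G.nbrs μ, ∑ j ∈ G.branch μ ν, gh j * (G.rhat ν j ᵥ* G.V) x := by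
    intro x
    rw [e0]
    calc (∑ b, (∑ ν ∈ G.nbrs μ, ∑ j ∈ G.branch μ ν, gh j • G.rhat ν j) b * G.V b x)
        = ∑ b, ∑ ν ∈ G.nbrs μ, ∑ j ∈ G.branch μ ν, gh j * G.rhat ν j b * G.V b x := by
          apply Finset.sum_congr rfl; intro b _
          rw [Finset.sum_apply, Finset.sum_mul]
          apply Finset.sum_congr rfl; intro ν _
          rw [Finset.sum_apply, Finset.sum_mul]
          apply Finset.sum_congr rfl; intro j _
          rw [Pi.smul_apply, smul_eq_mul]
      _ = ∑ ν ∈ G.nbrs μ, ∑ b, ∑ j ∈ G.branch μ ν, gh j * G.rhat ν j b * G.V b x :=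
          Finset.sum_comm
      _ = ∑ ν ∈ G.nbrs μ, ∑ j ∈ G.branch μ ν, ∑ b, gh j * G.rhat ν j b * G.V b x := by
          apply Finset.sum_congr rfl; intro ν _; exact Finset.sum_comm
      _ = ∑ ν ∈ G.nbrs μ, ∑ j ∈ G.branch μ ν, gh j * (G.rhat ν j ᵥ* G.V) x := by
          apply Finset.sum_congr rfl; intro ν _
          apply Finset.sum_congr rfl; intro j _
          rw [e0, Finset.mul_sum]
          apply Finset.sum_congr rfl; intro b _
          ring
  have hvec2 : ∀ x, ((∑ ν ∈ G.nbrs μ, hh ν • G.rhat μ ν) ᵥ* G.V) x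
      = ∑ ν ∈ G.nbrs μ, hh ν * (G.rhat μ ν ᵥ* G.V) x := by
    intro x
    rw [e0]
    calc (∑ b, (∑ ν ∈ G.nbrs μ, hh ν • G.rhat μ ν) b * G.V b x)
        = ∑ b, ∑ ν ∈ G.nbrs μ, hh ν * G.rhat μ ν b * G.V b x := by
          apply Finset.sum_congr rfl; intro b _
          rw [Finset.sum_apply, Finset.sum_mul]
          apply Finset.sum_congr rfl; intro ν _
          rw [Pi.smul_apply, smul_eq_mul]
      _ = ∑ ν ∈ G.nbrs μ, ∑ b, hh ν * G.rhat μ ν b * G.V b x := Finset.sum_comm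
      _ = ∑ ν ∈ G.nbrs μ, hh ν * (G.rhat μ ν ᵥ* G.V) x := by
          apply Finset.sum_congr rfl; intro ν _
          rw [e0, Finset.mul_sum]
          apply Finset.sum_congr rfl; intro b _
          ring
  have hrepr : ∀ x, (G.transform μ fh gh 0 ᵥ* G.V) x
      = (fh ᵥ* G.V) x - ∑ ν ∈ G.nbrs μ, ∑ j ∈ G.branch μ ν, gh j * (G.rhat ν j ᵥ* G.V) x := by
    intro x
    rw [hzero, Matrix.sub_vecMul, Pi.sub_apply, hvec]
  have hrepr2 : ∀ x, (G.transform μ fh 0 hh ᵥ* G.V) x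
      = (fh ᵥ* G.V) x + ∑ ν ∈ G.nbrs μ, hh ν * (G.rhat μ ν ᵥ* G.V) x := by
    intro x
    rw [hzero2, Matrix.add_vecMul, Pi.add_apply, hvec2]
  -- Part 4
  have part4 : ∀ x, (G.transform μ fh gh 0 ᵥ* G.V) x
      = (fh ᵥ* G.V) x
        - ∑ ν ∈ G.nbrs μ, ∑ j ∈ G.branch μ ν, gh j * G.phi μ ν j x * G.V μ x := by
    intro x
    rw [hrepr]
    congr 1
    apply Finset.sum_congr rfl; intro ν _
    apply Finset.sum_congr rfl; intro j _
    rw [hphi, mul_assoc, div_mul_cancel₀ _ (G.V_ne μ x)]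
  -- Part 6
  have part6 : ∀ x, (G.transform μ fh 0 hh ᵥ* G.V) x
      = (fh ᵥ* G.V) x + ∑ ν ∈ G.nbrs μ, hh ν * G.phi μ μ ν x * G.V μ x := by
    intro x
    rw [hrepr2]
    congr 1
    apply Finset.sum_congr rfl; intro ν _
    rw [hphi, mul_assoc, div_mul_cancel₀ _ (G.V_ne μ x)]
  -- Part 5
  have part5 : (∀ j, 0 ≤ gh j) → ∀ x,
      (G.transform μ fh gh 0 ᵥ* G.V) x ≤ (fh ᵥ* G.V) x ∧
      (G.dist μ x ≤ 1 → (G.transform μ fh gh 0 ᵥ* G.V) x = (fh ᵥ* G.V) x) ∧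
      ((G.transform μ fh gh 0 ᵥ* G.V) x < (fh ᵥ* G.V) x ↔
        ∃ ν ∈ G.nbrs μ, ∃ j ∈ G.branch μ ν, 0 < gh j ∧ x ∈ G.branch ν j) := by
    intro hgh x
    have hF : ∀ ν ∈ G.nbrs μ, ∀ j ∈ G.branch μ ν, 0 ≤ gh j * (G.rhat ν j ᵥ* G.V) x :=
      fun ν _ j _ => mul_nonneg (hgh j) (G.rhat_key ν j x).1
    have hFin : ∀ ν ∈ G.nbrs μ, 0 ≤ ∑ j ∈ G.branch μ ν, gh j * (G.rhat ν j ᵥ* G.V) x :=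
      fun ν hν => Finset.sum_nonneg fun j hj => hF ν hν j hj
    have hFsum : 0 ≤ ∑ ν ∈ G.nbrs μ, ∑ j ∈ G.branch μ ν, gh j * (G.rhat ν j ᵥ* G.V) x :=
      Finset.sum_nonneg hFin
    refine ⟨by rw [hrepr]; linarith, ?_, ?_⟩
    · intro hd
      have hd' : G.graph.dist μ x ≤ 1 := hd
      have hx : x = μ ∨ G.adj μ x := by
        rcases Nat.lt_or_ge (G.graph.dist μ x) 1 with h | h
        · left
          exact ((G.conn.dist_eq_zero_iff).1 (by omega : G.graph.dist μ x = 0)).symm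
        · right
          have hone : G.graph.dist μ x = 1 := by omega
          exact SimpleGraph.dist_eq_one_iff_adj.1 hone
      rw [hrepr]
      have hzer : (∑ ν ∈ G.nbrs μ, ∑ j ∈ G.branch μ ν, gh j * (G.rhat ν j ᵥ* G.V) x) = 0 := by
        apply Finset.sum_eq_zero; intro ν hν
        apply Finset.sum_eq_zero; intro j hj
        have h0 : (G.rhat ν j ᵥ* G.V) x = 0 := by
          rw [G.rhat_zero_iff]
          intro hb
          rw [G.mem_branch] at hb
          exact hb.2.2 (G.center_pathSet (G.mem_nbrs.1 hν) hj hx)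
        rw [h0, mul_zero]
      rw [hzer]; ring
    · rw [hrepr]
      constructor
      · intro hlt
        have hpos : 0 < ∑ ν ∈ G.nbrs μ, ∑ j ∈ G.branch μ ν, gh j * (G.rhat ν j ᵥ* G.V) x := by
          linarith
        obtain ⟨ν, hν, hν2⟩ := Finset.exists_lt_of_sum_lt (f := fun _ => (0:ℚ))
          (by simpa using hpos)
        obtain ⟨j, hj, hj2⟩ := Finset.exists_lt_of_sum_lt (f := fun _ => (0:ℚ))
          (by simpa using hν2)
        have hghj : 0 < gh j := by
          rcases (hgh j).lt_or_eq with h | h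
          · exact h
          · rw [← h, zero_mul] at hj2; exact absurd hj2 (lt_irrefl 0)
        have hrpos : 0 < (G.rhat ν j ᵥ* G.V) x := by
          by_contra hcon
          push_neg at hcon
          exact absurd hj2 (not_lt.2 (mul_nonpos_of_nonneg_of_nonpos (le_of_lt hghj) hcon))
        exact ⟨ν, hν, j, hj, hghj, (G.rhat_key ν j x).2.1 hrpos⟩
      · rintro ⟨ν, hν, j, hj, hghj, hxb⟩
        have hterm : 0 < gh j * (G.rhat ν j ᵥ* G.V) x :=
          mul_pos hghj ((G.rhat_key ν j x).2.2 hxb)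
        have h1 : gh j * (G.rhat ν j ᵥ* G.V) x
            ≤ ∑ j' ∈ G.branch μ ν, gh j' * (G.rhat ν j' ᵥ* G.V) x :=
          Finset.single_le_sum (fun j' hj' => hF ν hν j' hj') hj
        have h2 : (∑ j' ∈ G.branch μ ν, gh j' * (G.rhat ν j' ᵥ* G.V) x)
            ≤ ∑ ν' ∈ G.nbrs μ, ∑ j' ∈ G.branch μ ν', gh j' * (G.rhat ν' j' ᵥ* G.V) x :=
          Finset.single_le_sum hFin hν
        linarith
  -- Part 7
  have part7 : (∀ j, 0 ≤ hh j) → ∀ x,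
      (fh ᵥ* G.V) x ≤ (G.transform μ fh 0 hh ᵥ* G.V) x ∧
      ((fh ᵥ* G.V) x < (G.transform μ fh 0 hh ᵥ* G.V) x ↔
        ∃ ν ∈ G.nbrs μ, 0 < hh ν ∧ x ∈ G.branch μ ν) := by
    intro hhh x
    have hF : ∀ ν ∈ G.nbrs μ, 0 ≤ hh ν * (G.rhat μ ν ᵥ* G.V) x :=
      fun ν _ => mul_nonneg (hhh ν) (G.rhat_key μ ν x).1
    have hFsum : 0 ≤ ∑ ν ∈ G.nbrs μ, hh ν * (G.rhat μ ν ᵥ* G.V) x :=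
      Finset.sum_nonneg hF
    refine ⟨by rw [hrepr2]; linarith, ?_⟩
    rw [hrepr2]
    constructor
    · intro hlt
      have hpos : 0 < ∑ ν ∈ G.nbrs μ, hh ν * (G.rhat μ ν ᵥ* G.V) x := by linarith
      obtain ⟨ν, hν, hν2⟩ := Finset.exists_lt_of_sum_lt (f := fun _ => (0:ℚ))
        (by simpa using hpos)
      have hhν : 0 < hh ν := by
        rcases (hhh ν).lt_or_eq with h | h
        · exact h
        · rw [← h, zero_mul] at hν2; exact absurd hν2 (lt_irrefl 0)
      have hrpos : 0 < (G.rhat μ ν ᵥ* G.V) x := by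
        by_contra hcon
        push_neg at hcon
        exact absurd hν2 (not_lt.2 (mul_nonpos_of_nonneg_of_nonpos (le_of_lt hhν) hcon))
      exact ⟨ν, hν, hhν, (G.rhat_key μ ν x).2.1 hrpos⟩
    · rintro ⟨ν, hν, hhν, hxb⟩
      have hterm : 0 < hh ν * (G.rhat μ ν ᵥ* G.V) x :=
        mul_pos hhν ((G.rhat_key μ ν x).2.2 hxb)
      have h1 : hh ν * (G.rhat μ ν ᵥ* G.V) x
          ≤ ∑ ν' ∈ G.nbrs μ, hh ν' * (G.rhat μ ν' ᵥ* G.V) x :=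
        Finset.single_le_sum hF hν
      linarith
  exact ⟨part1, part2, part3, part4, part5, part6, part7⟩
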